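/- arXiv:1909.12280 — 3 statements merged into one kernel-verified Lean document; each statement's English description precedes it below -/
import Mathlib

section
/- For any positive integers q, M, N and any complex numbers (a_n), the sum over all Dirichlet characters χ mod q of |∑_{M < n ≤ M+N} a_n χ(n)|² is at most a constant times (φ(q) + (φ(q)/q)·N) times ∑_{M < n ≤ M+N, gcd(n,q)=1} |a_n|². -/
open Finset


lemma count_bound (q M N m : ℕ) (hq : 0 < q) :
    (((Ioc M (M + N)).filter (fun n : ℕ => (n : ZMod q) = (m : ZMod q))).card : ℝ) ≤
      (N : ℝ) / q + 1 := by
  have hcond' : (fun n : ℕ => (n : ZMod q) = (m : ZMod q)) = fun n => n ≡ m [MOD q] := by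
    funext n
    simp [ZMod.natCast_eq_natCast_iff, eq_iff_iff]
  have hset : (Ioc M (M + N)).filter (fun n : ℕ => (n : ZMod q) = (m : ZMod q)) =
      (Ioc M (M + N)).filter (fun n => n ≡ m [MOD q]) :=
    Finset.filter_congr (fun n _ => by simp [ZMod.natCast_eq_natCast_iff])
  rw [hset]
  have h := Nat.Ioc_filter_modEq_card M (M + N) hq m
  have hq' : (0 : ℚ) < q := by exact_mod_cast hq
  have hfloor : ((⌊((M + N : ℕ) - (m : ℚ)) / (q : ℚ)⌋ - ⌊((M : ℚ) - m) / q⌋ : ℤ) : ℚ)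
      ≤ (N : ℚ) / q + 1 := by
    have h1 : (⌊((M + N : ℕ) - (m : ℚ)) / (q : ℚ)⌋ : ℚ) ≤ ((M + N : ℕ) - (m : ℚ)) / q :=
      Int.floor_le _
    have h2 : ((M : ℚ) - m) / q - 1 < (⌊((M : ℚ) - m) / q⌋ : ℚ) := Int.sub_one_lt_floor _
    have h3 : ((M + N : ℕ) - (m : ℚ)) / q - ((M : ℚ) - m) / q = (N : ℚ) / q := by
      rw [div_sub_div_same]; push_cast; ring_nf
    push_cast at h1 h3 ⊢
    linarith
  have hcard : ((((Ioc M (M + N)).filter (fun n => n ≡ m [MOD q])).card : ℤ) : ℚ)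
      ≤ (N : ℚ) / q + 1 := by
    rw [h]
    rw [Int.cast_max]
    exact max_le hfloor (by push_cast; positivity)
  have : ((((Ioc M (M + N)).filter (fun n => n ≡ m [MOD q])).card : ℚ))
      ≤ (N : ℚ) / q + 1 := by exact_mod_cast hcard
  have hr := (Rat.cast_le (K := ℝ)).mpr this
  push_cast at hr
  exact_mod_cast hr

/-- Orthogonality/large-sieve estimate: for any `q, M, N ≥ 1` and complex numbers `aₙ`,
`∑_{χ mod q} |∑_{M < n ≤ M+N} aₙ χ(n)|² ≪ (φ(q) + (φ(q)/q)·N) · ∑_{M<n≤M+N, (n,q)=1} |aₙ|²`. -/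
theorem stmt1 :
    ∃ C : ℝ, 0 < C ∧ ∀ (q M N : ℕ), 0 < q → 0 < M → 0 < N → ∀ a : ℕ → ℂ,
      ∑ χ : DirichletCharacter ℂ q, ‖∑ n ∈ Ioc M (M + N), a n * χ (n : ZMod q)‖ ^ 2 ≤
        C * ((q.totient : ℝ) + (q.totient : ℝ) / (q : ℝ) * (N : ℝ)) *
          ∑ n ∈ (Ioc M (M + N)).filter (fun n => Nat.gcd n q = 1), ‖a n‖ ^ 2 := by
  refine ⟨1, one_pos, ?_⟩
  intro q M N hq hM hN a
  haveI : NeZero q := ⟨hq.ne'⟩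
  set I : Finset ℕ := (Ioc M (M + N)).filter (fun n => Nat.gcd n q = 1) with hI
  set S : DirichletCharacter ℂ q → ℂ := fun χ => ∑ n ∈ I, a n * χ (n : ZMod q) with hS
  have hunit : ∀ n ∈ I, IsUnit ((n : ℕ) : ZMod q) := by
    intro n hn
    rw [ZMod.isUnit_iff_coprime]
    exact (mem_filter.mp hn).2
  -- restrict original sum to coprime n
  have hSS : ∀ χ : DirichletCharacter ℂ q,
      ∑ n ∈ Ioc M (M + N), a n * χ (n : ZMod q) = S χ := by
    intro χ
    refine (Finset.sum_filter_of_ne ?_).symm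
    intro n hn h
    by_contra hg
    exact h (by rw [χ.map_nonunit (fun hu => hg ((ZMod.isUnit_iff_coprime n q).mp hu)), mul_zero])
  -- orthogonality
  have orth : ∀ m ∈ I, ∀ n ∈ I,
      ∑ χ : DirichletCharacter ℂ q, χ (m : ZMod q) * (starRingEnd ℂ) (χ (n : ZMod q)) =
        if ((n : ℕ) : ZMod q) = ((m : ℕ) : ZMod q) then (q.totient : ℂ) else 0 := by
    intro m hm n hn
    have h1 : ∀ χ : DirichletCharacter ℂ q,
        (starRingEnd ℂ) (χ (n : ZMod q)) = χ (((n : ZMod q))⁻¹) := by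
      intro χ
      have ha : (starRingEnd ℂ) (χ (n : ZMod q)) = (χ (n : ZMod q))⁻¹ := by
        rw [← MulChar.inv_apply_eq_inv', ← MulChar.star_apply', starRingEnd_apply]
      have hb : χ (((n : ZMod q))⁻¹) = (χ (n : ZMod q))⁻¹ := by
        refine eq_inv_of_mul_eq_one_left ?_
        rw [← map_mul, ZMod.inv_mul_of_unit _ (hunit n hn), map_one]
      rw [ha, hb]
    calc ∑ χ : DirichletCharacter ℂ q, χ (m : ZMod q) * (starRingEnd ℂ) (χ (n : ZMod q))
        = ∑ χ : DirichletCharacter ℂ q, χ (((n : ZMod q))⁻¹) * χ (m : ZMod q) :=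
          Finset.sum_congr rfl fun χ _ => by rw [h1 χ, mul_comm]
      _ = _ := DirichletCharacter.sum_char_inv_mul_char_eq ℂ (hunit n hn) _
  -- expansion
  have expand : ∑ χ : DirichletCharacter ℂ q, S χ * (starRingEnd ℂ) (S χ) =
      (q.totient : ℂ) * ∑ m ∈ I, ∑ n ∈ I,
        (if ((n : ℕ) : ZMod q) = ((m : ℕ) : ZMod q)
          then a m * (starRingEnd ℂ) (a n) else 0) := by
    have h1 : ∀ χ : DirichletCharacter ℂ q, S χ * (starRingEnd ℂ) (S χ)
        = ∑ m ∈ I, ∑ n ∈ I, (a m * (starRingEnd ℂ) (a n)) *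
            (χ (m : ZMod q) * (starRingEnd ℂ) (χ (n : ZMod q))) := by
      intro χ
      rw [hS, map_sum, Finset.sum_mul_sum]
      refine Finset.sum_congr rfl fun m _ => Finset.sum_congr rfl fun n _ => ?_
      rw [map_mul]
      ring
    simp_rw [h1]
    rw [Finset.sum_comm]
    rw [Finset.mul_sum]
    refine Finset.sum_congr rfl fun m hm => ?_
    rw [Finset.sum_comm, Finset.mul_sum]
    refine Finset.sum_congr rfl fun n hn => ?_
    rw [← Finset.mul_sum, orth m hm n hn]
    split_ifs with h
    · ring
    · rw [mul_zero, mul_zero]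
  -- the LHS as a real part
  have lhs_eq : ∑ χ : DirichletCharacter ℂ q, ‖S χ‖ ^ 2
      = (∑ χ : DirichletCharacter ℂ q, S χ * (starRingEnd ℂ) (S χ)).re := by
    rw [Complex.re_sum]
    refine Finset.sum_congr rfl fun χ _ => ?_
    rw [Complex.mul_conj]
    simp [Complex.normSq_eq_norm_sq, ← Complex.ofReal_pow]
  -- first bound
  have bound1 : (∑ χ : DirichletCharacter ℂ q, S χ * (starRingEnd ℂ) (S χ)).re
      ≤ (q.totient : ℝ) * ∑ m ∈ I, ∑ n ∈ I,
          (if ((n : ℕ) : ZMod q) = ((m : ℕ) : ZMod q) then ‖a m‖ * ‖a n‖ else 0) := by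
    rw [expand]
    refine (Complex.re_le_norm _).trans ?_
    rw [norm_mul, Complex.norm_natCast]
    refine mul_le_mul_of_nonneg_left ?_ (Nat.cast_nonneg _)
    refine (norm_sum_le _ _).trans ?_
    refine Finset.sum_le_sum fun m _ => ?_
    refine (norm_sum_le _ _).trans ?_
    refine Finset.sum_le_sum fun n _ => ?_
    split_ifs with h
    · rw [norm_mul, RingHomIsometric.norm_map]
    · simp
  -- second bound
  have bound2 : ∑ m ∈ I, ∑ n ∈ I,
        (if ((n : ℕ) : ZMod q) = ((m : ℕ) : ZMod q) then ‖a m‖ * ‖a n‖ else 0)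
      ≤ ((N : ℝ) / q + 1) * ∑ n ∈ I, ‖a n‖ ^ 2 := by
    have step1 : ∑ m ∈ I, ∑ n ∈ I,
          (if ((n : ℕ) : ZMod q) = ((m : ℕ) : ZMod q) then ‖a m‖ * ‖a n‖ else 0)
        ≤ ∑ m ∈ I, ∑ n ∈ I,
          (if ((n : ℕ) : ZMod q) = ((m : ℕ) : ZMod q)
            then (‖a m‖ ^ 2 + ‖a n‖ ^ 2) / 2 else 0) := by
      refine Finset.sum_le_sum fun m _ => Finset.sum_le_sum fun n _ => ?_
      split_ifs with h
      · nlinarith [sq_nonneg (‖a m‖ - ‖a n‖), norm_nonneg (a m), norm_nonneg (a n)]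
      · exact le_refl 0
    have step2 : ∑ m ∈ I, ∑ n ∈ I,
          (if ((n : ℕ) : ZMod q) = ((m : ℕ) : ZMod q)
            then (‖a m‖ ^ 2 + ‖a n‖ ^ 2) / 2 else 0)
        = ∑ m ∈ I, ∑ n ∈ I,
          (if ((n : ℕ) : ZMod q) = ((m : ℕ) : ZMod q) then ‖a m‖ ^ 2 else 0) := by
      have hsplit : ∑ m ∈ I, ∑ n ∈ I,
            (if ((n : ℕ) : ZMod q) = ((m : ℕ) : ZMod q)
              then (‖a m‖ ^ 2 + ‖a n‖ ^ 2) / 2 else 0)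
          = (∑ m ∈ I, ∑ n ∈ I,
              (if ((n : ℕ) : ZMod q) = ((m : ℕ) : ZMod q) then ‖a m‖ ^ 2 else 0)) / 2
            + (∑ m ∈ I, ∑ n ∈ I,
              (if ((n : ℕ) : ZMod q) = ((m : ℕ) : ZMod q) then ‖a n‖ ^ 2 else 0)) / 2 := by
        rw [Finset.sum_div, Finset.sum_div, ← Finset.sum_add_distrib]
        refine Finset.sum_congr rfl fun m _ => ?_
        rw [Finset.sum_div, Finset.sum_div, ← Finset.sum_add_distrib]
        refine Finset.sum_congr rfl fun n _ => ?_
        split_ifs <;> ring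
      rw [hsplit]
      have hsym : ∑ m ∈ I, ∑ n ∈ I,
            (if ((n : ℕ) : ZMod q) = ((m : ℕ) : ZMod q) then ‖a n‖ ^ 2 else 0)
          = ∑ m ∈ I, ∑ n ∈ I,
            (if ((n : ℕ) : ZMod q) = ((m : ℕ) : ZMod q) then ‖a m‖ ^ 2 else 0) := by
        rw [Finset.sum_comm]
        refine Finset.sum_congr rfl fun m _ => Finset.sum_congr rfl fun n _ => ?_
        congr 1
        simp [eq_comm]
      rw [hsym]
      ring
    have step3 : ∑ m ∈ I, ∑ n ∈ I,
          (if ((n : ℕ) : ZMod q) = ((m : ℕ) : ZMod q) then ‖a m‖ ^ 2 else 0)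
        ≤ ((N : ℝ) / q + 1) * ∑ n ∈ I, ‖a n‖ ^ 2 := by
      rw [Finset.mul_sum]
      refine Finset.sum_le_sum fun m hm => ?_
      rw [← Finset.sum_filter, Finset.sum_const, nsmul_eq_mul]
      have hsub : I.filter (fun n : ℕ => ((n : ℕ) : ZMod q) = ((m : ℕ) : ZMod q))
          ⊆ (Ioc M (M + N)).filter (fun n : ℕ => ((n : ℕ) : ZMod q) = ((m : ℕ) : ZMod q)) := by
        rw [hI]
        exact Finset.filter_subset_filter _ (Finset.filter_subset _ _)
      have hcard : ((I.filter (fun n : ℕ => ((n : ℕ) : ZMod q) = ((m : ℕ) : ZMod q))).card : ℝ)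
          ≤ (N : ℝ) / q + 1 :=
        le_trans (by exact_mod_cast Finset.card_le_card hsub) (count_bound q M N m hq)
      have := mul_le_mul_of_nonneg_right hcard (sq_nonneg ‖a m‖)
      rw [mul_comm ((N : ℝ) / q + 1)]
      exact this.trans (by rw [mul_comm])
    calc (∑ m ∈ I, ∑ n ∈ I, if ((n : ℕ) : ZMod q) = ((m : ℕ) : ZMod q)
            then ‖a m‖ * ‖a n‖ else 0)
        ≤ _ := step1
      _ = _ := step2
      _ ≤ _ := step3
  calc ∑ χ : DirichletCharacter ℂ q, ‖∑ n ∈ Ioc M (M + N), a n * χ (n : ZMod q)‖ ^ 2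
      = ∑ χ : DirichletCharacter ℂ q, ‖S χ‖ ^ 2 := by simp_rw [hSS]
    _ = (∑ χ : DirichletCharacter ℂ q, S χ * (starRingEnd ℂ) (S χ)).re := lhs_eq
    _ ≤ (q.totient : ℝ) * ∑ m ∈ I, ∑ n ∈ I,
          (if ((n : ℕ) : ZMod q) = ((m : ℕ) : ZMod q) then ‖a m‖ * ‖a n‖ else 0) := bound1
    _ ≤ (q.totient : ℝ) * (((N : ℝ) / q + 1) * ∑ n ∈ I, ‖a n‖ ^ 2) :=
        mul_le_mul_of_nonneg_left bound2 (Nat.cast_nonneg _)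
    _ = 1 * ((q.totient : ℝ) + (q.totient : ℝ) / (q : ℝ) * (N : ℝ)) * ∑ n ∈ I, ‖a n‖ ^ 2 := by
        ring
end

section
/- Let f : ℕ → ℂ be multiplicative with |f(n)| ≤ 1 for all n, let 2 ≤ y ≤ x, and suppose f(p^k) = 0 for all primes p ≤ y and all k ≥ 1. Then for any t ∈ ℝ, |F(1 + 1/log x + it)| · (log y)/(log x) is bounded above and below by absolute constants times exp(−𝔻(f, n^{it}; y, x)²), where F(s) := ∏_{p ≤ x} ∑_{k ≥ 0} f(p^k) p^{−ks} and 𝔻(f, n^{it}; y, x)² := ∑_{y < p ≤ x} (1 − Re(f(p) p^{−it}))/p. -/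
open Finset


namespace Stmt5Aux

lemma telescope_sum_le {w g : ℕ → ℝ} {N : ℕ} (hN : 1 ≤ N)
    (h : ∀ k, 2 ≤ k → k ≤ N → w k ≤ g (k - 1) - g k) :
    ∑ k ∈ Finset.Icc 2 N, w k ≤ g 1 - g N := by
  induction N with
  | zero => omega
  | succ n ih =>
    rcases Nat.lt_or_ge n 1 with h1 | h1
    · interval_cases n
      · simp
    · rw [Finset.sum_Icc_succ_top (by omega)]
      have h2 := h (n + 1) (by omega) le_rfl
      have h3 := ih h1 (fun k hk hk' => h k hk (by omega))
      have : ((n + 1 : ℕ) : ℕ) - 1 = n := by omega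
      rw [this] at h2
      linarith

lemma telescope_sum_eq {g : ℕ → ℝ} {m N : ℕ} (h : m ≤ N) :
    ∑ n ∈ Finset.Ico m N, (g (n + 1) - g n) = g N - g m := by
  induction N with
  | zero =>
    have : m = 0 := by omega
    subst this; simp
  | succ n ih =>
    rcases Nat.lt_or_ge n m with h1 | h1
    · have : m = n + 1 := by omega
      subst this; simp
    · rw [Finset.sum_Ico_succ_top (by omega)]
      rw [ih h1]; ring

lemma sum_inv_sq_le (N : ℕ) : ∑ k ∈ Finset.Icc 2 N, ((k : ℝ) ^ 2)⁻¹ ≤ 1 := by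
  rcases Nat.lt_or_ge N 1 with h | h
  · interval_cases N; simp
  · have := telescope_sum_le (w := fun k => ((k : ℝ) ^ 2)⁻¹) (g := fun k => ((k : ℝ))⁻¹) h ?_
    · simp at this
      have hN : (0:ℝ) ≤ ((N:ℝ))⁻¹ := by positivity
      linarith
    · intro k hk hkN
      have hk1 : (1 : ℝ) ≤ (k : ℝ) - 1 := by
        have : (2 : ℝ) ≤ (k : ℝ) := by exact_mod_cast hk
        linarith
      have hc : ((k - 1 : ℕ) : ℝ) = (k : ℝ) - 1 := by
        have : 1 ≤ k := by omega
        push_cast [Nat.cast_sub this]; ring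
      rw [hc]
      have hkpos : (0:ℝ) < (k:ℝ) := by positivity
      have h1 : ((k : ℝ) - 1)⁻¹ - ((k:ℝ))⁻¹ = (((k:ℝ) - 1) * k)⁻¹ := by
        rw [inv_sub_inv (by linarith) (by positivity)]
        ring_nf
      rw [h1]
      apply inv_anti₀
      · positivity
      · nlinarith

lemma log_le_two_sqrt {x : ℝ} (hx : 1 ≤ x) : Real.log x ≤ 2 * Real.sqrt x := by
  have h0 : (0:ℝ) ≤ x := by linarith
  have h1 : Real.log x = 2 * Real.log (Real.sqrt x) := by
    rw [Real.log_sqrt h0]; ring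
  have h2 : Real.log (Real.sqrt x) ≤ Real.sqrt x - 1 :=
    Real.log_le_sub_one_of_pos (Real.sqrt_pos.2 (by linarith))
  have h3 : (0:ℝ) ≤ Real.sqrt x := Real.sqrt_nonneg x
  linarith

lemma sum_sqrt_tele_le (N : ℕ) :
    ∑ k ∈ Finset.Icc 2 N, (Real.sqrt k * ((k : ℝ) - 1))⁻¹ ≤ 3 := by
  rcases Nat.lt_or_ge N 1 with h | h
  · interval_cases N; simp
  · have := telescope_sum_le (w := fun k => (Real.sqrt k * ((k : ℝ) - 1))⁻¹)
      (g := fun k => 3 * (Real.sqrt k)⁻¹) h ?_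
    · simp only [Real.sqrt_one, inv_one, mul_one, Nat.cast_one] at this
      have hN : (0:ℝ) ≤ 3 * (Real.sqrt N)⁻¹ := by positivity
      linarith
    · intro k hk hkN
      have hc : ((k - 1 : ℕ) : ℝ) = (k : ℝ) - 1 := by
        have : 1 ≤ k := by omega
        push_cast [Nat.cast_sub this]; ring
      rw [hc]
      have hk2 : (2:ℝ) ≤ (k:ℝ) := by exact_mod_cast hk
      set a := Real.sqrt ((k:ℝ) - 1) with ha
      set b := Real.sqrt (k:ℝ) with hb
      have ha0 : 0 < a := Real.sqrt_pos.2 (by linarith)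
      have hb0 : 0 < b := Real.sqrt_pos.2 (by linarith)
      have ha2 : a ^ 2 = (k:ℝ) - 1 := Real.sq_sqrt (by linarith)
      have hb2 : b ^ 2 = (k:ℝ) := Real.sq_sqrt (by linarith)
      have hab : a ≤ b := Real.sqrt_le_sqrt (by linarith)
      have hb2a : b ≤ 2 * a := by nlinarith
      have hrw : 3 * a⁻¹ - 3 * b⁻¹ = (3 * (b - a)) / (a * b) := by
        field_simp
      have hrw2 : (b * ((k:ℝ) - 1))⁻¹ = 1 / (b * ((k:ℝ)-1)) := by rw [one_div]
      have hk1 : (0:ℝ) < (k:ℝ) - 1 := by linarith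
      rw [hrw, hrw2, div_le_div_iff₀ (by positivity) (mul_pos ha0 hb0), ← ha2]
      nlinarith [mul_nonneg (mul_nonneg ha0.le hb0.le)
          (mul_nonneg (sub_nonneg.2 hab) (sub_nonneg.2 hb2a)), sq_nonneg (b - a)]

end Stmt5Aux


namespace Stmt5Aux

def Pall (n : ℕ) : Finset ℕ := (Finset.Icc 1 n).filter Nat.Prime

lemma mem_Pall {n p : ℕ} : p ∈ Pall n ↔ p.Prime ∧ p ≤ n := by
  simp only [Pall, Finset.mem_filter, Finset.mem_Icc]
  constructor
  · rintro ⟨⟨h1, h2⟩, hp⟩; exact ⟨hp, h2⟩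
  · rintro ⟨hp, h⟩; exact ⟨⟨hp.one_lt.le, h⟩, hp⟩

lemma sum_log_Pall_le (n : ℕ) : ∑ p ∈ Pall n, Real.log p ≤ (n : ℝ) * Real.log 4 := by
  have hPall : Pall n = (Finset.range (n + 1)).filter Nat.Prime := by
    ext p
    simp only [mem_Pall, Finset.mem_filter, Finset.mem_range, Nat.lt_succ_iff]
    tauto
  have h1 : Real.log (primorial n : ℝ) = ∑ p ∈ Pall n, Real.log p := by
    rw [primorial, hPall]
    push_cast
    rw [Real.log_prod]
    intro p hp
    have := (Finset.mem_filter.1 hp).2.pos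
    positivity
  rw [← h1]
  have h2 : ((primorial n : ℕ) : ℝ) ≤ ((4 ^ n : ℕ) : ℝ) := by
    exact_mod_cast primorial_le_4_pow n
  calc Real.log (primorial n : ℝ) ≤ Real.log ((4 ^ n : ℕ) : ℝ) := by
        apply Real.log_le_log (by exact_mod_cast (primorial_pos n)) h2
    _ = (n : ℝ) * Real.log 4 := by push_cast; rw [Real.log_pow]

lemma log_factorial_eq (n : ℕ) :
    Real.log ((Nat.factorial n : ℕ) : ℝ) = ∑ p ∈ Pall n, (((Nat.factorial n)).factorization p : ℝ) * Real.log p := by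
  have hne : (Nat.factorial n : ℕ) ≠ 0 := (Nat.factorial_pos n).ne'
  conv_lhs => rw [← Nat.factorization_prod_pow_eq_self hne]
  rw [Finsupp.prod]
  have hsub : ((Nat.factorial n)).factorization.support ⊆ Pall n := by
    intro p hp
    rw [Nat.support_factorization] at hp
    have hprime := Nat.prime_of_mem_primeFactors hp
    have hdvd := Nat.dvd_of_mem_primeFactors hp
    exact mem_Pall.2 ⟨hprime, (Nat.Prime.dvd_factorial hprime).1 hdvd⟩
  push_cast
  rw [Real.log_prod]
  · rw [Finset.sum_subset hsub]
    · apply Finset.sum_congr rfl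
      intro p hp
      rw [Real.log_pow]
    · intro p hp hnp
      rw [Finsupp.notMem_support_iff.1 hnp]
      simp
  · intro p hp
    have hprime := (mem_Pall.1 (hsub hp)).1
    have := hprime.pos
    positivity

lemma div_le_factorization {p n : ℕ} (hp : p.Prime) (hpn : p ≤ n) :
    n / p ≤ ((Nat.factorial n)).factorization p := by
  haveI : Fact p.Prime := ⟨hp⟩
  rw [Nat.factorization_def _ hp, padicValNat_factorial (Nat.lt_succ_self _)]
  have h1 : 1 ∈ Finset.Ico 1 (Nat.log p n + 1) := by
    simp only [Finset.mem_Ico]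
    refine ⟨le_rfl, ?_⟩
    have := Nat.log_pos hp.one_lt hpn
    omega
  calc n / p = n / p ^ 1 := by rw [pow_one]
    _ ≤ ∑ i ∈ Finset.Ico 1 (Nat.log p n + 1), n / p ^ i :=
        Finset.single_le_sum (f := fun i => n / p ^ i) (fun i _ => Nat.zero_le _) h1

lemma factorization_le {p n : ℕ} (hp : p.Prime) :
    (((Nat.factorial n)).factorization p : ℝ) ≤ (n : ℝ) / ((p : ℝ) - 1) := by
  haveI : Fact p.Prime := ⟨hp⟩
  have hp2 : (2 : ℝ) ≤ (p : ℝ) := by exact_mod_cast hp.two_le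
  have hp0 : (0 : ℝ) < (p : ℝ) := by linarith
  rw [Nat.factorization_def _ hp, padicValNat_factorial (Nat.lt_succ_self _)]
  set b := Nat.log p n + 1
  push_cast
  have step1 : ∑ i ∈ Finset.Ico 1 b, ((n / p ^ i : ℕ) : ℝ)
      ≤ ∑ i ∈ Finset.Ico 1 b, (n : ℝ) * ((p : ℝ)⁻¹) ^ i := by
    apply Finset.sum_le_sum
    intro i _
    calc ((n / p ^ i : ℕ) : ℝ) ≤ (n : ℝ) / ((p ^ i : ℕ) : ℝ) := Nat.cast_div_le
      _ = (n : ℝ) * ((p : ℝ)⁻¹) ^ i := by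
          push_cast
          rw [div_eq_mul_inv, inv_pow]
  have hr0 : (0 : ℝ) ≤ (p : ℝ)⁻¹ := by positivity
  have hr1 : (p : ℝ)⁻¹ < 1 := by
    rw [inv_lt_one_iff₀]; right; linarith
  have hsummable : Summable (fun i : ℕ => (n : ℝ) * ((p : ℝ)⁻¹) ^ (1 + i)) := by
    apply Summable.mul_left
    exact ((summable_geometric_of_lt_one hr0 hr1).comp_injective (add_right_injective 1))
  have step2 : ∑ i ∈ Finset.Ico 1 b, (n : ℝ) * ((p : ℝ)⁻¹) ^ i
      ≤ ∑' i : ℕ, (n : ℝ) * ((p : ℝ)⁻¹) ^ (1 + i) := by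
    rw [Finset.sum_Ico_eq_sum_range]
    apply Summable.sum_le_tsum
    · intro i _; positivity
    · exact hsummable
  have step3 : ∑' i : ℕ, (n : ℝ) * ((p : ℝ)⁻¹) ^ (1 + i) = (n : ℝ) / ((p : ℝ) - 1) := by
    have : ∀ i : ℕ, (n : ℝ) * ((p : ℝ)⁻¹) ^ (1 + i)
        = ((n : ℝ) * (p : ℝ)⁻¹) * ((p : ℝ)⁻¹) ^ i := by
      intro i; rw [pow_add, pow_one]; ring
    simp_rw [this]
    rw [tsum_mul_left, tsum_geometric_of_lt_one hr0 hr1]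
    field_simp
  linarith [step1, step2, step3.le, step3.ge]


lemma M1_upper {n : ℕ} (hn : 1 ≤ n) :
    ∑ p ∈ Pall n, Real.log p / p ≤ Real.log n + Real.log 4 := by
  have hn0 : (0 : ℝ) < n := by exact_mod_cast hn
  have key : ∑ p ∈ Pall n, ((n : ℝ) / p - 1) * Real.log p ≤ (n : ℝ) * Real.log n := by
    calc ∑ p ∈ Pall n, ((n : ℝ) / p - 1) * Real.log p
        ≤ ∑ p ∈ Pall n, ((Nat.factorial n).factorization p : ℝ) * Real.log p := by
          apply Finset.sum_le_sum
          intro p hp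
          obtain ⟨hprime, hpn⟩ := mem_Pall.1 hp
          have hp0 : (0 : ℝ) < (p : ℝ) := by exact_mod_cast hprime.pos
          have hlog0 : (0 : ℝ) ≤ Real.log p := Real.log_natCast_nonneg p
          apply mul_le_mul_of_nonneg_right _ hlog0
          have h1 : (n : ℝ) / p - 1 ≤ ((n / p : ℕ) : ℝ) := by
            have hdm := Nat.div_add_mod n p
            have hmod : n % p < p := Nat.mod_lt _ hprime.pos
            have : (n : ℝ) < (p : ℝ) * ((n / p : ℕ) : ℝ) + p := by
              have := Nat.div_add_mod n p
              have hcast : (n : ℝ) = (p : ℝ) * ((n / p : ℕ) : ℝ) + ((n % p : ℕ) : ℝ) := by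
                exact_mod_cast congrArg (Nat.cast : ℕ → ℝ) (Nat.div_add_mod n p).symm
              have : ((n % p : ℕ) : ℝ) < (p : ℝ) := by exact_mod_cast hmod
              linarith
            rw [div_sub' hp0.ne', div_le_iff₀ hp0]
            nlinarith
          calc (n : ℝ) / p - 1 ≤ ((n / p : ℕ) : ℝ) := h1
            _ ≤ ((Nat.factorial n).factorization p : ℝ) := by
                exact_mod_cast div_le_factorization hprime hpn
      _ = Real.log ((Nat.factorial n : ℕ) : ℝ) := (log_factorial_eq n).symm
      _ ≤ (n : ℝ) * Real.log n := by
          have h1 : ((Nat.factorial n : ℕ) : ℝ) ≤ ((n ^ n : ℕ) : ℝ) := by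
            exact_mod_cast Nat.factorial_le_pow n
          calc Real.log ((Nat.factorial n : ℕ) : ℝ) ≤ Real.log ((n ^ n : ℕ) : ℝ) :=
              Real.log_le_log (by exact_mod_cast Nat.factorial_pos n) h1
            _ = (n : ℝ) * Real.log n := by push_cast; rw [Real.log_pow]
  have expand : ∑ p ∈ Pall n, ((n : ℝ) / p - 1) * Real.log p
      = (n : ℝ) * ∑ p ∈ Pall n, Real.log p / p - ∑ p ∈ Pall n, Real.log p := by
    rw [Finset.mul_sum, ← Finset.sum_sub_distrib]
    apply Finset.sum_congr rfl
    intro p hp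
    have hp0 : (0 : ℝ) < (p : ℝ) := by exact_mod_cast (mem_Pall.1 hp).1.pos
    field_simp
  have hlogsum := sum_log_Pall_le n
  have : (n : ℝ) * ∑ p ∈ Pall n, Real.log p / p ≤ (n : ℝ) * (Real.log n + Real.log 4) := by
    nlinarith [key, expand, hlogsum]
  exact le_of_mul_le_mul_left (by linarith) hn0

lemma M1_lower {n : ℕ} (hn : 2 ≤ n) :
    Real.log n - 7 ≤ ∑ p ∈ Pall n, Real.log p / p := by
  have hn0 : (0 : ℝ) < n := by positivity
  have hn0' : (2:ℝ) ≤ (n:ℝ) := by exact_mod_cast hn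
  -- lower bound on log n!
  have h1 : (n : ℝ) * Real.log n - n ≤ Real.log ((Nat.factorial n : ℕ) : ℝ) := by
    have hf := Real.pow_div_factorial_le_exp (n : ℝ) (by positivity) n
    have hfact0 : (0 : ℝ) < ((Nat.factorial n : ℕ) : ℝ) := by exact_mod_cast Nat.factorial_pos n
    have h2 : (n : ℝ) ^ n ≤ Real.exp n * ((Nat.factorial n : ℕ) : ℝ) := by
      rw [div_le_iff₀ hfact0] at hf; linarith
    have h3 : Real.log ((n:ℝ) ^ n) ≤ Real.log (Real.exp n * ((Nat.factorial n : ℕ) : ℝ)) :=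
      Real.log_le_log (by positivity) h2
    rw [Real.log_pow, Real.log_mul (Real.exp_ne_zero _) hfact0.ne', Real.log_exp] at h3
    linarith
  -- upper bound on log n! via factorization
  have h2 : Real.log ((Nat.factorial n : ℕ) : ℝ) ≤ (n : ℝ) * ∑ p ∈ Pall n, Real.log p / ((p:ℝ) - 1) := by
    rw [log_factorial_eq, Finset.mul_sum]
    apply Finset.sum_le_sum
    intro p hp
    obtain ⟨hprime, hpn⟩ := mem_Pall.1 hp
    have hlog0 : (0 : ℝ) ≤ Real.log p := Real.log_natCast_nonneg p
    calc ((Nat.factorial n).factorization p : ℝ) * Real.log p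
        ≤ ((n : ℝ) / ((p:ℝ) - 1)) * Real.log p :=
          mul_le_mul_of_nonneg_right (factorization_le hprime) hlog0
      _ = (n : ℝ) * (Real.log p / ((p:ℝ) - 1)) := by ring
  -- difference of the two prime sums
  have h3 : ∑ p ∈ Pall n, Real.log p / ((p:ℝ) - 1) - ∑ p ∈ Pall n, Real.log p / p ≤ 6 := by
    rw [← Finset.sum_sub_distrib]
    have hterm : ∀ p ∈ Pall n, Real.log p / ((p:ℝ) - 1) - Real.log p / p
        ≤ 2 * (Real.sqrt p * ((p:ℝ) - 1))⁻¹ := by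
      intro p hp
      obtain ⟨hprime, hpn⟩ := mem_Pall.1 hp
      have hp2 : (2 : ℝ) ≤ (p : ℝ) := by exact_mod_cast hprime.two_le
      have hp0 : (0 : ℝ) < (p : ℝ) := by linarith
      have hp1 : (0 : ℝ) < (p : ℝ) - 1 := by linarith
      have hsq : Real.sqrt p * Real.sqrt p = (p : ℝ) := Real.mul_self_sqrt hp0.le
      have hsq0 : (0:ℝ) < Real.sqrt p := Real.sqrt_pos.2 hp0
      have hlog : Real.log p ≤ 2 * Real.sqrt p := log_le_two_sqrt (by linarith)
      have heq : Real.log p / ((p:ℝ) - 1) - Real.log p / p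
          = Real.log p / ((p:ℝ) * ((p:ℝ) - 1)) := by
        field_simp
        ring
      rw [heq]
      rw [div_le_iff₀ (by positivity)]
      have hrw : 2 * (Real.sqrt p * ((p:ℝ) - 1))⁻¹ * ((p:ℝ) * ((p:ℝ) - 1))
          = 2 * Real.sqrt p := by
        rw [mul_inv]
        field_simp
        nlinarith [hsq]
      rw [hrw]
      exact hlog
    calc ∑ p ∈ Pall n, (Real.log p / ((p:ℝ) - 1) - Real.log p / p)
        ≤ ∑ p ∈ Pall n, 2 * (Real.sqrt p * ((p:ℝ) - 1))⁻¹ := Finset.sum_le_sum hterm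
      _ ≤ ∑ k ∈ Finset.Icc 2 n, 2 * (Real.sqrt k * ((k:ℝ) - 1))⁻¹ := by
          apply Finset.sum_le_sum_of_subset_of_nonneg
          · intro p hp
            obtain ⟨hprime, hpn⟩ := mem_Pall.1 hp
            exact Finset.mem_Icc.2 ⟨hprime.two_le, hpn⟩
          · intro k hk _
            have h2k : 2 ≤ k := (Finset.mem_Icc.1 hk).1
            have hk2 : (2:ℝ) ≤ (k:ℝ) := by exact_mod_cast h2k
            have hs : (0:ℝ) < Real.sqrt k := Real.sqrt_pos.2 (by linarith)
            have : (0:ℝ) < Real.sqrt k * ((k:ℝ) - 1) := by nlinarith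
            positivity
      _ = 2 * ∑ k ∈ Finset.Icc 2 n, (Real.sqrt k * ((k:ℝ) - 1))⁻¹ := by
          rw [Finset.mul_sum]
      _ ≤ 2 * 3 := by
          have := sum_sqrt_tele_le n
          linarith
      _ = 6 := by norm_num
  nlinarith [h1, h2, h3]

end Stmt5Aux


namespace Stmt5Aux

noncomputable def aP (k : ℕ) : ℝ := if Nat.Prime k then Real.log k / k else 0

noncomputable def BP (n : ℕ) : ℝ := ∑ k ∈ Finset.Icc 1 n, aP k

lemma BP_eq (n : ℕ) : BP n = ∑ p ∈ Pall n, Real.log p / p := by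
  rw [BP, Pall, Finset.sum_filter]
  simp [aP]

lemma BP_succ (n : ℕ) : BP (n + 1) = BP n + aP (n + 1) :=
  Finset.sum_Icc_succ_top (by omega) _

lemma log_four_le : Real.log 4 ≤ 3 := by
  have := Real.log_le_sub_one_of_pos (by norm_num : (0:ℝ) < 4)
  linarith

lemma BP_bound {n : ℕ} (hn : 2 ≤ n) : |BP n - Real.log n| ≤ 7 := by
  rw [BP_eq, abs_le]
  constructor
  · have := M1_lower hn
    linarith
  · have := M1_upper (by omega : 1 ≤ n)
    have := log_four_le
    linarith

lemma abel_id (c : ℕ → ℝ) {m N : ℕ} (h : m ≤ N) :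
    ∑ n ∈ Finset.Ioc m N, aP n * c n
      = BP N * c N - BP m * c m - ∑ n ∈ Finset.Ico m N, BP n * (c (n + 1) - c n) := by
  induction N with
  | zero =>
    have : m = 0 := by omega
    subst this; simp
  | succ n ih =>
    rcases Nat.lt_or_ge n m with h1 | h1
    · have : m = n + 1 := by omega
      subst this; simp
    · rw [Finset.sum_Ioc_succ_top h1, Finset.sum_Ico_succ_top h1, ih h1, BP_succ]
      ring

lemma log2_pos : (0.6931471803 : ℝ) < Real.log 2 := Real.log_two_gt_d9

-- per-term comparison between `log n * (c n - c (n+1))` and `loglog (n+1) - loglog n`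
lemma perterm_bound {n : ℕ} (hn : 2 ≤ n) :
    |Real.log (n:ℝ) * ((Real.log (n:ℝ))⁻¹ - (Real.log ((n:ℝ) + 1))⁻¹)
      - (Real.log (Real.log ((n:ℝ) + 1)) - Real.log (Real.log (n:ℝ)))| ≤ 3 * ((n : ℝ) ^ 2)⁻¹ := by
  have hn2 : (2 : ℝ) ≤ (n : ℝ) := by exact_mod_cast hn
  have hL : (0.6931471803 : ℝ) < Real.log n := by
    calc (0.6931471803 : ℝ) < Real.log 2 := log2_pos
      _ ≤ Real.log n := Real.log_le_log (by norm_num) hn2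
  have hL0 : (0:ℝ) < Real.log n := by linarith
  have hL' : Real.log n < Real.log ((n : ℝ) + 1) := by
    apply Real.log_lt_log (by linarith); linarith
  have hL'0 : (0:ℝ) < Real.log ((n:ℝ) + 1) := by linarith
  set L := Real.log n
  set L' := Real.log ((n:ℝ) + 1)
  -- increment bound
  have hinc : L' - L ≤ (n : ℝ)⁻¹ := by
    have h1 : L' - L = Real.log (((n:ℝ) + 1) / n) := by
      rw [Real.log_div (by linarith) (by linarith)]
    rw [h1]
    have h2 := Real.log_le_sub_one_of_pos (show (0:ℝ) < ((n:ℝ)+1)/n by positivity)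
    have h3 : ((n:ℝ) + 1) / n - 1 = (n:ℝ)⁻¹ := by field_simp; ring
    linarith
  have hinc0 : 0 ≤ L' - L := by linarith
  -- term = (L' - L)/L'
  have hterm : L * (L⁻¹ - L'⁻¹) = (L' - L) / L' := by field_simp
  -- δ = log(L'/L)
  have hδ : Real.log L' - Real.log L = Real.log (L' / L) := by
    rw [Real.log_div hL'0.ne' hL0.ne']
  have hδlow : (L' - L) / L' ≤ Real.log (L' / L) := by
    have h1 := Real.one_sub_inv_le_log_of_pos (show (0:ℝ) < L'/L by positivity)
    have h2 : (L'/L)⁻¹ = L / L' := by field_simp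
    rw [h2] at h1
    have h3 : 1 - L / L' = (L' - L) / L' := by field_simp
    linarith
  have hδhigh : Real.log (L' / L) ≤ (L' - L) / L := by
    have h1 := Real.log_le_sub_one_of_pos (show (0:ℝ) < L'/L by positivity)
    have h2 : L'/L - 1 = (L' - L)/L := by field_simp
    linarith
  have hdiff : (L' - L)/L - (L' - L)/L' ≤ 3 * ((n:ℝ)^2)⁻¹ := by
    have h1 : (L' - L)/L - (L' - L)/L' = (L' - L) * (L' - L) / (L * L') := by
      field_simp
    rw [h1]
    have h2 : (L' - L) * (L' - L) ≤ (n:ℝ)⁻¹ * (n:ℝ)⁻¹ :=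
      mul_le_mul hinc hinc hinc0 (by positivity)
    have h3 : (0.48 : ℝ) ≤ L * L' := by nlinarith
    have h4 : (L' - L) * (L' - L) / (L * L') ≤ ((n:ℝ)⁻¹ * (n:ℝ)⁻¹) / 0.48 := by
      apply div_le_div₀ (by positivity) h2 (by norm_num) h3
    have h5 : ((n:ℝ)⁻¹ * (n:ℝ)⁻¹) / 0.48 ≤ 3 * ((n:ℝ)^2)⁻¹ := by
      rw [← inv_pow, pow_two, div_le_iff₀ (by norm_num : (0:ℝ) < 0.48)]
      have h0 : (0:ℝ) ≤ (n:ℝ)⁻¹ * (n:ℝ)⁻¹ := by positivity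
      nlinarith
    linarith
  rw [hterm, hδ, abs_le]
  constructor <;> linarith

end Stmt5Aux


namespace Stmt5Aux

set_option maxHeartbeats 1000000 in
lemma mertens2_nat {m N : ℕ} (hm : 2 ≤ m) (hmN : m ≤ N) :
    |∑ n ∈ Finset.Ioc m N, aP n * (Real.log n)⁻¹
      - (Real.log (Real.log N) - Real.log (Real.log m))| ≤ 36 := by
  have hN2 : 2 ≤ N := le_trans hm hmN
  have hlog : ∀ k : ℕ, 2 ≤ k → (0.6931471803 : ℝ) < Real.log k := by
    intro k hk
    calc (0.6931471803 : ℝ) < Real.log 2 := log2_pos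
      _ ≤ Real.log k := Real.log_le_log (by norm_num) (by exact_mod_cast hk)
  have hcinv : ∀ k : ℕ, 2 ≤ k → (Real.log k)⁻¹ ≤ 1.45 := by
    intro k hk
    have h := hlog k hk
    rw [inv_le_comm₀ (by linarith) (by norm_num)]
    linarith
  have habel := abel_id (fun n : ℕ => (Real.log n)⁻¹) hmN
  -- nonneg differences
  have hd0 : ∀ n : ℕ, 2 ≤ n → 0 ≤ (Real.log n)⁻¹ - (Real.log ((n+1 : ℕ) : ℝ))⁻¹ := by
    intro n hn
    have h1 := hlog n hn
    have h2 : Real.log (n : ℝ) ≤ Real.log ((n+1 : ℕ) : ℝ) := by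
      apply Real.log_le_log (by positivity)
      push_cast; linarith [show (2:ℝ) ≤ (n:ℝ) by exact_mod_cast hn]
    have : (0:ℝ) < Real.log (n:ℝ) := by linarith
    have h3 : (Real.log ((n+1:ℕ):ℝ))⁻¹ ≤ (Real.log (n:ℝ))⁻¹ := by
      apply inv_anti₀ this h2
    linarith
  -- telescope of differences
  have htele : ∑ n ∈ Finset.Ico m N, ((Real.log n)⁻¹ - (Real.log ((n+1:ℕ) : ℝ))⁻¹)
      = (Real.log m)⁻¹ - (Real.log N)⁻¹ := by
    have := telescope_sum_eq (g := fun n : ℕ => -(Real.log n)⁻¹) hmN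
    have heq : ∀ n ∈ Finset.Ico m N,
        ((Real.log (n:ℝ))⁻¹ - (Real.log ((n+1:ℕ) : ℝ))⁻¹)
          = (fun n : ℕ => -(Real.log n)⁻¹) (n+1) - (fun n : ℕ => -(Real.log n)⁻¹) n := by
      intro n _; simp only []; ring
    rw [Finset.sum_congr rfl heq, this]
    ring
  -- telescope of loglog
  have hll : ∑ n ∈ Finset.Ico m N,
      (Real.log (Real.log ((n+1:ℕ):ℝ)) - Real.log (Real.log (n:ℝ)))
      = Real.log (Real.log N) - Real.log (Real.log m) :=
    telescope_sum_eq (g := fun n : ℕ => Real.log (Real.log n)) hmN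
  -- decompose BP
  have hsplit : ∑ n ∈ Finset.Ico m N, BP n * ((Real.log ((n+1:ℕ):ℝ))⁻¹ - (Real.log n)⁻¹)
      = -(∑ n ∈ Finset.Ico m N, Real.log (n:ℝ) * ((Real.log n)⁻¹ - (Real.log ((n+1:ℕ):ℝ))⁻¹))
        - ∑ n ∈ Finset.Ico m N, (BP n - Real.log (n:ℝ)) * ((Real.log n)⁻¹ - (Real.log ((n+1:ℕ):ℝ))⁻¹) := by
    have h := Finset.sum_congr rfl (fun n (_ : n ∈ Finset.Ico m N) => by
      ring :
      ∀ n ∈ Finset.Ico m N, BP n * ((Real.log ((n+1:ℕ):ℝ))⁻¹ - (Real.log n)⁻¹)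
        = (-(Real.log (n:ℝ) * ((Real.log n)⁻¹ - (Real.log ((n+1:ℕ):ℝ))⁻¹)))
          - ((BP n - Real.log (n:ℝ)) * ((Real.log n)⁻¹ - (Real.log ((n+1:ℕ):ℝ))⁻¹)))
    rw [h, Finset.sum_sub_distrib, Finset.sum_neg_distrib]
  -- bound: main log part close to loglog telescope
  have hmain : |∑ n ∈ Finset.Ico m N, Real.log (n:ℝ) * ((Real.log n)⁻¹ - (Real.log ((n+1:ℕ):ℝ))⁻¹)
      - (Real.log (Real.log N) - Real.log (Real.log m))| ≤ 3 := by
    rw [← hll, ← Finset.sum_sub_distrib]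
    calc |∑ n ∈ Finset.Ico m N, (Real.log (n:ℝ) * ((Real.log n)⁻¹ - (Real.log ((n+1:ℕ):ℝ))⁻¹)
            - (Real.log (Real.log ((n+1:ℕ):ℝ)) - Real.log (Real.log (n:ℝ))))|
        ≤ ∑ n ∈ Finset.Ico m N, |Real.log (n:ℝ) * ((Real.log n)⁻¹ - (Real.log ((n+1:ℕ):ℝ))⁻¹)
            - (Real.log (Real.log ((n+1:ℕ):ℝ)) - Real.log (Real.log (n:ℝ)))| :=
          Finset.abs_sum_le_sum_abs _ _
      _ ≤ ∑ n ∈ Finset.Ico m N, 3 * (((n:ℝ)) ^ 2)⁻¹ := by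
          apply Finset.sum_le_sum
          intro n hn
          have hn2 : 2 ≤ n := le_trans hm (Finset.mem_Ico.1 hn).1
          have := perterm_bound hn2
          have hc : ((n+1:ℕ):ℝ) = (n:ℝ) + 1 := by push_cast; ring
          rw [hc]
          exact this
      _ ≤ ∑ k ∈ Finset.Icc 2 N, 3 * (((k:ℝ)) ^ 2)⁻¹ := by
          apply Finset.sum_le_sum_of_subset_of_nonneg
          · intro n hn
            obtain ⟨h1, h2⟩ := Finset.mem_Ico.1 hn
            exact Finset.mem_Icc.2 ⟨le_trans hm h1, by omega⟩
          · intro k _ _; positivity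
      _ = 3 * ∑ k ∈ Finset.Icc 2 N, (((k:ℝ)) ^ 2)⁻¹ := by rw [Finset.mul_sum]
      _ ≤ 3 := by have := sum_inv_sq_le N; linarith
  -- bound: remainder part
  have hRpart : |∑ n ∈ Finset.Ico m N, (BP n - Real.log (n:ℝ)) * ((Real.log n)⁻¹ - (Real.log ((n+1:ℕ):ℝ))⁻¹)| ≤ 11 := by
    calc |∑ n ∈ Finset.Ico m N, (BP n - Real.log (n:ℝ)) * ((Real.log n)⁻¹ - (Real.log ((n+1:ℕ):ℝ))⁻¹)|
        ≤ ∑ n ∈ Finset.Ico m N, |(BP n - Real.log (n:ℝ)) * ((Real.log n)⁻¹ - (Real.log ((n+1:ℕ):ℝ))⁻¹)| :=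
          Finset.abs_sum_le_sum_abs _ _
      _ ≤ ∑ n ∈ Finset.Ico m N, 7 * ((Real.log n)⁻¹ - (Real.log ((n+1:ℕ):ℝ))⁻¹) := by
          apply Finset.sum_le_sum
          intro n hn
          have hn2 : 2 ≤ n := le_trans hm (Finset.mem_Ico.1 hn).1
          rw [abs_mul, abs_of_nonneg (hd0 n hn2)]
          exact mul_le_mul_of_nonneg_right (BP_bound hn2) (hd0 n hn2)
      _ = 7 * ((Real.log m)⁻¹ - (Real.log N)⁻¹) := by rw [← Finset.mul_sum, htele]
      _ ≤ 11 := by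
          have h1 := hcinv m hm
          have h2 := hlog N hN2
          have h3 : (0:ℝ) < (Real.log N)⁻¹ := by positivity
          linarith
  -- boundary terms
  have hbN : BP N * (Real.log N)⁻¹ = 1 + (BP N - Real.log N) * (Real.log N)⁻¹ := by
    have h2 := hlog N hN2
    have : Real.log (N:ℝ) * (Real.log (N:ℝ))⁻¹ = 1 := mul_inv_cancel₀ (by linarith)
    nlinarith [this]
  have hbm : BP m * (Real.log m)⁻¹ = 1 + (BP m - Real.log m) * (Real.log m)⁻¹ := by
    have h2 := hlog m hm
    have : Real.log (m:ℝ) * (Real.log (m:ℝ))⁻¹ = 1 := mul_inv_cancel₀ (by linarith)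
    nlinarith [this]
  have hRN : |(BP N - Real.log N) * (Real.log N)⁻¹| ≤ 11 := by
    rw [abs_mul]
    have h1 := BP_bound hN2
    have h2 := hcinv N hN2
    have h3 : (0:ℝ) ≤ (Real.log N)⁻¹ := by
      have := hlog N hN2; positivity
    rw [abs_of_nonneg h3]
    nlinarith [abs_nonneg (BP N - Real.log (N:ℝ))]
  have hRm : |(BP m - Real.log m) * (Real.log m)⁻¹| ≤ 11 := by
    rw [abs_mul]
    have h1 := BP_bound hm
    have h2 := hcinv m hm
    have h3 : (0:ℝ) ≤ (Real.log m)⁻¹ := by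
      have := hlog m hm; positivity
    rw [abs_of_nonneg h3]
    nlinarith [abs_nonneg (BP m - Real.log (m:ℝ))]
  -- assemble
  rw [habel, hsplit, hbN, hbm]
  have e1 := abs_le.1 hmain
  have e2 := abs_le.1 hRpart
  have e3 := abs_le.1 hRN
  have e4 := abs_le.1 hRm
  rw [abs_le]
  constructor <;> linarith

end Stmt5Aux


namespace Stmt5Aux

lemma loglog_floor_close {u : ℝ} (hu : 2 ≤ u) :
    |Real.log (Real.log u) - Real.log (Real.log (⌊u⌋₊ : ℝ))| ≤ 1 := by
  set N := ⌊u⌋₊ with hN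
  have hN2 : 2 ≤ N := Nat.le_floor (by exact_mod_cast hu)
  have hN2' : (2:ℝ) ≤ (N:ℝ) := by exact_mod_cast hN2
  have hNu : (N : ℝ) ≤ u := Nat.floor_le (by linarith)
  have hu1 : u < (N : ℝ) + 1 := Nat.lt_floor_add_one u
  have hlogN : (0:ℝ) < Real.log N := Real.log_pos (by linarith)
  have h1 : Real.log N ≤ Real.log u := Real.log_le_log (by linarith) hNu
  have h2 : Real.log u ≤ 2 * Real.log N := by
    calc Real.log u ≤ Real.log ((N:ℝ) ^ 2) := by
          apply Real.log_le_log (by linarith)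
          nlinarith
      _ = 2 * Real.log N := by
          rw [Real.log_pow]; push_cast; ring
  have h3 : Real.log (Real.log u) - Real.log (Real.log N) = Real.log (Real.log u / Real.log N) := by
    rw [Real.log_div (by linarith) hlogN.ne']
  rw [abs_le]
  constructor
  · have : Real.log (Real.log N) ≤ Real.log (Real.log u) :=
      Real.log_le_log hlogN h1
    linarith
  · rw [h3]
    have h4 : Real.log u / Real.log N ≤ 2 := by
      rw [div_le_iff₀ hlogN]; linarith
    have hlogu : (0:ℝ) < Real.log u := by linarith
    have h5 := Real.log_le_sub_one_of_pos (show (0:ℝ) < Real.log u / Real.log N from div_pos hlogu hlogN)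
    linarith

lemma mertens2_real {x y : ℝ} (hy : 2 ≤ y) (hyx : y ≤ x) :
    |∑ n ∈ Finset.Ioc ⌊y⌋₊ ⌊x⌋₊, aP n * (Real.log n)⁻¹
      - (Real.log (Real.log x) - Real.log (Real.log y))| ≤ 38 := by
  have hx : 2 ≤ x := le_trans hy hyx
  have hm : 2 ≤ ⌊y⌋₊ := Nat.le_floor (by exact_mod_cast hy)
  have hmN : ⌊y⌋₊ ≤ ⌊x⌋₊ := Nat.floor_mono hyx
  have h1 := mertens2_nat hm hmN
  have h2 := loglog_floor_close hx
  have h3 := loglog_floor_close hy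
  rw [abs_le] at *
  constructor <;> linarith

end Stmt5Aux


namespace Stmt5Aux

section Euler

variable (f : ℕ → ℂ) (p : ℕ) (σ t : ℝ)

/-- The complex exponent. -/
noncomputable def wE : ℂ := ((σ : ℝ) : ℂ) + (t : ℂ) * Complex.I

lemma wE_re : (wE σ t).re = σ := by
  simp [wE]

lemma exp_re (k : ℕ) : (-(k : ℂ) * wE σ t).re = -(k * σ) := by
  simp [wE, Complex.mul_re]

variable {f p σ t}

lemma term_norm_le (hf : ∀ n, ‖f n‖ ≤ 1) (hp : p.Prime) (k : ℕ) :
    ‖f (p ^ k) * (p : ℂ) ^ (-(k : ℂ) * wE σ t)‖ ≤ ((p : ℝ) ^ (-σ)) ^ k := by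
  rw [norm_mul]
  have h1 : ‖(p : ℂ) ^ (-(k : ℂ) * wE σ t)‖ = (p : ℝ) ^ (-(k * σ) : ℝ) := by
    rw [Complex.norm_natCast_cpow_of_pos hp.pos, exp_re]
  rw [h1]
  have h2 : (p : ℝ) ^ (-(k * σ) : ℝ) = ((p : ℝ) ^ (-σ)) ^ k := by
    rw [show (-(k * σ) : ℝ) = (-σ) * (k : ℝ) by ring, Real.rpow_mul (by positivity),
      Real.rpow_natCast]
  rw [h2]
  have h3 : (0:ℝ) ≤ ((p:ℝ) ^ (-σ)) ^ k := by positivity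
  calc ‖f (p ^ k)‖ * ((p : ℝ) ^ (-σ)) ^ k ≤ 1 * ((p : ℝ) ^ (-σ)) ^ k :=
      mul_le_mul_of_nonneg_right (hf _) h3
    _ = _ := one_mul _

lemma r_le_inv (hp : p.Prime) (hσ : 1 < σ) : (p : ℝ) ^ (-σ) ≤ (p : ℝ)⁻¹ := by
  have hp1 : (1 : ℝ) ≤ (p : ℝ) := by exact_mod_cast hp.one_lt.le
  calc (p : ℝ) ^ (-σ) ≤ (p : ℝ) ^ (-1 : ℝ) :=
      Real.rpow_le_rpow_of_exponent_le hp1 (by linarith)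
    _ = (p : ℝ)⁻¹ := Real.rpow_neg_one _

lemma r_nonneg : (0:ℝ) ≤ (p : ℝ) ^ (-σ) := Real.rpow_nonneg (by positivity) _

lemma r_lt_one (hp : p.Prime) (hσ : 1 < σ) : (p : ℝ) ^ (-σ) < 1 := by
  have h2 : (2:ℝ) ≤ (p:ℝ) := by exact_mod_cast hp.two_le
  calc (p : ℝ) ^ (-σ) ≤ (p : ℝ)⁻¹ := r_le_inv hp hσ
    _ < 1 := by
      rw [inv_lt_one_iff₀]; right; linarith

lemma summable_term (hf : ∀ n, ‖f n‖ ≤ 1) (hp : p.Prime) (hσ : 1 < σ) :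
    Summable (fun k : ℕ => f (p ^ k) * (p : ℂ) ^ (-(k : ℂ) * wE σ t)) :=
  Summable.of_norm_bounded (summable_geometric_of_lt_one r_nonneg (r_lt_one hp hσ))
    (term_norm_le hf hp)

set_option maxHeartbeats 2000000 in
/-- Per-prime Euler factor estimate. -/
lemma euler_factor_bound (hf : ∀ n, ‖f n‖ ≤ 1) (hf1 : f 1 = 1)
    (hp : p.Prime) (hp3 : 3 ≤ p) (hσ : 1 < σ) :
    (1/2 : ℝ) ≤ ‖∑' k : ℕ, f (p ^ k) * (p : ℂ) ^ (-(k : ℂ) * wE σ t)‖ ∧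
    |Real.log ‖∑' k : ℕ, f (p ^ k) * (p : ℂ) ^ (-(k : ℂ) * wE σ t)‖
      - (f p * (p : ℂ) ^ (-((t : ℂ) * Complex.I))).re / p|
      ≤ 4 * ((p:ℝ)^2)⁻¹ + Real.log p / p * (σ - 1) := by
  have hp0 : (0:ℝ) < (p:ℝ) := by exact_mod_cast hp.pos
  have hp3' : (3:ℝ) ≤ (p:ℝ) := by exact_mod_cast hp3
  set r : ℝ := (p : ℝ) ^ (-σ) with hrdef
  have hr0 : (0:ℝ) ≤ r := r_nonneg
  have hr1 : r < 1 := r_lt_one hp hσ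
  have hrp : r ≤ (p:ℝ)⁻¹ := r_le_inv hp hσ
  have hrp3 : r ≤ 1/3 := by
    calc r ≤ (p:ℝ)⁻¹ := hrp
      _ ≤ 1/3 := by rw [inv_le_comm₀ hp0 (by norm_num)]; linarith
  have hsum := summable_term (σ := σ) (t := t) hf hp hσ
  have hsum1 : Summable (fun k : ℕ => f (p ^ (k+1)) * (p : ℂ) ^ (-((k+1 : ℕ) : ℂ) * wE σ t)) :=
    (summable_nat_add_iff 1).2 hsum
  have hsum2 : Summable (fun k : ℕ => f (p ^ (k+1+1)) * (p : ℂ) ^ (-((k+1+1 : ℕ) : ℂ) * wE σ t)) :=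
    (summable_nat_add_iff 1).2 hsum1
  set z : ℂ := ∑' k : ℕ, f (p ^ (k+1)) * (p : ℂ) ^ (-((k+1 : ℕ) : ℂ) * wE σ t) with hzdef
  set z' : ℂ := ∑' k : ℕ, f (p ^ (k+1+1)) * (p : ℂ) ^ (-((k+1+1 : ℕ) : ℂ) * wE σ t) with hz'def
  -- split off k = 0
  have hG : (∑' k : ℕ, f (p ^ k) * (p : ℂ) ^ (-(k : ℂ) * wE σ t)) = 1 + z := by
    rw [Summable.tsum_eq_zero_add hsum]
    congr 1
    have : ((0 : ℕ) : ℂ) = 0 := by norm_num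
    rw [pow_zero, hf1, this, neg_zero, zero_mul, Complex.cpow_zero, one_mul]
  -- geometric bounds
  have hnorm_sum1 : Summable (fun k : ℕ => r ^ (k+1)) :=
    (summable_nat_add_iff 1).2 (summable_geometric_of_lt_one hr0 hr1)
  have hnorm_sum2 : Summable (fun k : ℕ => r ^ (k+1+1)) :=
    (summable_nat_add_iff 1).2 hnorm_sum1
  have htsum1 : ∑' k : ℕ, r ^ (k+1) = r * (1 - r)⁻¹ := by
    have h : (∑' k : ℕ, r ^ (k+1)) = ∑' k : ℕ, r * r ^ k :=
      tsum_congr (fun k => by rw [pow_succ]; ring)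
    rw [h, tsum_mul_left, tsum_geometric_of_lt_one hr0 hr1]
  have htsum2 : ∑' k : ℕ, r ^ (k+1+1) = r^2 * (1 - r)⁻¹ := by
    have h : (∑' k : ℕ, r ^ (k+1+1)) = ∑' k : ℕ, r^2 * r ^ k :=
      tsum_congr (fun k => by ring)
    rw [h, tsum_mul_left, tsum_geometric_of_lt_one hr0 hr1]
  have hinv_le : (1 - r)⁻¹ ≤ 3/2 := by
    rw [inv_le_comm₀ (by linarith) (by norm_num)]
    linarith
  have hznorm : Summable (fun k : ℕ => ‖f (p ^ (k+1)) * (p : ℂ) ^ (-((k+1:ℕ):ℂ) * wE σ t)‖) :=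
    Summable.of_nonneg_of_le (fun k => norm_nonneg _) (fun k => term_norm_le hf hp (k+1))
      hnorm_sum1
  have hz'norm : Summable (fun k : ℕ => ‖f (p ^ (k+1+1)) * (p : ℂ) ^ (-((k+1+1:ℕ):ℂ) * wE σ t)‖) :=
    Summable.of_nonneg_of_le (fun k => norm_nonneg _) (fun k => term_norm_le hf hp (k+1+1))
      hnorm_sum2
  have hz_le : ‖z‖ ≤ 3/2 * r := by
    have h1 : ‖z‖ ≤ ∑' k : ℕ, ‖f (p ^ (k+1)) * (p : ℂ) ^ (-((k+1:ℕ):ℂ) * wE σ t)‖ :=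
      norm_tsum_le_tsum_norm hznorm
    have h2 : ∑' k : ℕ, ‖f (p ^ (k+1)) * (p : ℂ) ^ (-((k+1:ℕ):ℂ) * wE σ t)‖
        ≤ ∑' k : ℕ, r ^ (k+1) :=
      Summable.tsum_le_tsum (fun k => term_norm_le hf hp (k+1)) hznorm hnorm_sum1
    nlinarith [htsum1, hinv_le, hr0]
  have hz'_le : ‖z'‖ ≤ 3/2 * ((p:ℝ)^2)⁻¹ := by
    have h1 : ‖z'‖ ≤ ∑' k : ℕ, ‖f (p ^ (k+1+1)) * (p : ℂ) ^ (-((k+1+1:ℕ):ℂ) * wE σ t)‖ :=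
      norm_tsum_le_tsum_norm hz'norm
    have h2 : ∑' k : ℕ, ‖f (p ^ (k+1+1)) * (p : ℂ) ^ (-((k+1+1:ℕ):ℂ) * wE σ t)‖
        ≤ ∑' k : ℕ, r ^ (k+1+1) :=
      Summable.tsum_le_tsum (fun k => term_norm_le hf hp (k+1+1)) hz'norm hnorm_sum2
    have h3 : r^2 ≤ ((p:ℝ)⁻¹)^2 := by nlinarith
    have h4 : ((p:ℝ)⁻¹)^2 = ((p:ℝ)^2)⁻¹ := by rw [inv_pow]
    nlinarith [htsum2, hinv_le, sq_nonneg r]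
  have hz_half : ‖z‖ ≤ 1/2 := by
    have : (3:ℝ)/2 * r ≤ 3/2 * (1/3) := by nlinarith
    linarith
  -- lower bound on the norm
  have hGnorm : (1/2 : ℝ) ≤ ‖1 + z‖ := by
    have h2 : ‖(1:ℂ)‖ ≤ ‖1 + z‖ + ‖z‖ := by
      calc ‖(1:ℂ)‖ = ‖(1 + z) - z‖ := by norm_num
        _ ≤ ‖1 + z‖ + ‖z‖ := norm_sub_le _ _
    rw [norm_one] at h2
    linarith
  -- complex log comparison
  have hlog_sub : ‖Complex.log (1 + z) - z‖ ≤ ‖z‖^2 := by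
    have h := Complex.norm_log_one_add_sub_self_le (show ‖z‖ < 1 by linarith)
    have h2 : (1 - ‖z‖)⁻¹ ≤ 2 := by
      rw [inv_le_comm₀ (by linarith) (by norm_num)]; linarith
    nlinarith [sq_nonneg ‖z‖]
  have hre1 : |(Complex.log (1 + z)).re - z.re| ≤ ‖z‖^2 := by
    have h := Complex.abs_re_le_norm (Complex.log (1 + z) - z)
    rw [Complex.sub_re] at h
    calc |(Complex.log (1+z)).re - z.re| ≤ ‖Complex.log (1+z) - z‖ := h
      _ = ‖Complex.log (1+z) - z‖ := rfl
      _ ≤ ‖z‖^2 := hlog_sub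
  -- split z
  have hzsplit : z = f p * (p:ℂ) ^ (-((1:ℕ):ℂ) * wE σ t) + z' := by
    have h0 : f (p ^ (0+1)) * (p:ℂ) ^ (-((0+1:ℕ):ℂ) * wE σ t)
        = f p * (p:ℂ) ^ (-((1:ℕ):ℂ) * wE σ t) := by norm_num
    rw [hzdef, Summable.tsum_eq_zero_add hsum1, h0, ← hz'def]
  -- first term of z
  have hpne : (p:ℂ) ≠ 0 := by
    simp only [ne_eq, Nat.cast_eq_zero]
    exact hp.pos.ne'
  have hrC : ((r:ℝ):ℂ) = (p:ℂ) ^ ((-σ : ℝ):ℂ) := by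
    rw [hrdef, Complex.ofReal_cpow hp0.le, Complex.ofReal_natCast]
  have hcpow : (p:ℂ) ^ (-((1:ℕ):ℂ) * wE σ t) = (r : ℂ) * (p:ℂ) ^ (-((t:ℂ) * Complex.I)) := by
    have h1 : -((1:ℕ):ℂ) * wE σ t = ((-σ : ℝ) : ℂ) + -((t:ℂ) * Complex.I) := by
      rw [wE]; push_cast; ring
    rw [h1, Complex.cpow_add _ _ hpne, hrC]
  have hre_term : (f p * (p:ℂ) ^ (-((1:ℕ):ℂ) * wE σ t)).re
      = r * (f p * (p:ℂ) ^ (-((t:ℂ) * Complex.I))).re := by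
    rw [hcpow, show f p * ((r:ℂ) * (p:ℂ) ^ (-((t:ℂ) * Complex.I)))
      = (r:ℂ) * (f p * (p:ℂ) ^ (-((t:ℂ) * Complex.I))) by ring]
    simp [Complex.mul_re]
  -- re bound of unimodular factor
  have hre_bd : |(f p * (p:ℂ) ^ (-((t:ℂ) * Complex.I))).re| ≤ 1 := by
    have h1 : ‖(p:ℂ) ^ (-((t:ℂ) * Complex.I))‖ = (p:ℝ) ^ ((-((t:ℂ) * Complex.I)).re) :=
      Complex.norm_natCast_cpow_of_pos hp.pos _
    have h2 : (-((t:ℂ) * Complex.I)).re = 0 := by simp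
    rw [h2, Real.rpow_zero] at h1
    calc |(f p * (p:ℂ) ^ (-((t:ℂ) * Complex.I))).re|
        ≤ ‖f p * (p:ℂ) ^ (-((t:ℂ) * Complex.I))‖ := Complex.abs_re_le_norm _
      _ = ‖f p‖ * ‖(p:ℂ) ^ (-((t:ℂ) * Complex.I))‖ := norm_mul _ _
      _ ≤ 1 * 1 := by
          rw [h1]
          exact mul_le_mul_of_nonneg_right (hf p) (by norm_num)
      _ = 1 := one_mul _
  -- r close to 1/p
  have hlogp0 : (0:ℝ) ≤ Real.log p := Real.log_natCast_nonneg p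
  have hu : r = (p:ℝ)⁻¹ * Real.exp (-(Real.log p * (σ - 1))) := by
    rw [hrdef, show (-σ : ℝ) = (-1) + (-(σ-1)) by ring, Real.rpow_add hp0, Real.rpow_neg_one]
    congr 1
    rw [Real.rpow_def_of_pos hp0]
    ring_nf
  have hu0 : (0:ℝ) ≤ Real.log p * (σ - 1) := mul_nonneg hlogp0 (by linarith)
  have hexp1 : Real.exp (-(Real.log p * (σ - 1))) ≤ 1 := by
    calc Real.exp (-(Real.log p * (σ - 1))) ≤ Real.exp 0 := Real.exp_le_exp.2 (by linarith)
      _ = 1 := Real.exp_zero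
  have hexp2 : 1 - Real.exp (-(Real.log p * (σ - 1))) ≤ Real.log p * (σ - 1) := by
    have := Real.add_one_le_exp (-(Real.log p * (σ - 1)))
    linarith
  have hrclose : |r - (p:ℝ)⁻¹| ≤ Real.log p / p * (σ - 1) := by
    rw [abs_sub_comm, abs_of_nonneg (by linarith : (0:ℝ) ≤ (p:ℝ)⁻¹ - r)]
    have h1 : (p:ℝ)⁻¹ - r = (p:ℝ)⁻¹ * (1 - Real.exp (-(Real.log p * (σ - 1)))) := by
      rw [hu]; ring
    have h2 : Real.log p / p * (σ - 1) = (p:ℝ)⁻¹ * (Real.log p * (σ - 1)) := by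
      field_simp
    rw [h1, h2]
    apply mul_le_mul_of_nonneg_left hexp2 (by positivity)
  -- z.re close to r * re
  have hzre : |z.re - r * (f p * (p:ℂ) ^ (-((t:ℂ) * Complex.I))).re| ≤ 3/2 * ((p:ℝ)^2)⁻¹ := by
    rw [hzsplit, Complex.add_re, hre_term]
    have h1 : |z'.re| ≤ ‖z'‖ := Complex.abs_re_le_norm _
    calc |r * (f p * (p:ℂ) ^ (-((t:ℂ) * Complex.I))).re + z'.re
          - r * (f p * (p:ℂ) ^ (-((t:ℂ) * Complex.I))).re| = |z'.re| := by ring_nf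
      _ ≤ ‖z'‖ := h1
      _ ≤ 3/2 * ((p:ℝ)^2)⁻¹ := hz'_le
  -- final combination
  rw [hG]
  refine ⟨hGnorm, ?_⟩
  have hlogeq : Real.log ‖1 + z‖ = (Complex.log (1 + z)).re := (Complex.log_re _).symm
  have hsq : ‖z‖^2 ≤ 9/4 * ((p:ℝ)^2)⁻¹ := by
    have h1 : ‖z‖ ≤ 3/2 * (p:ℝ)⁻¹ := by
      calc ‖z‖ ≤ 3/2 * r := hz_le
        _ ≤ 3/2 * (p:ℝ)⁻¹ := by linarith
    have h2 : ‖z‖^2 ≤ (3/2 * (p:ℝ)⁻¹)^2 := by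
      apply sq_le_sq' _ h1
      have := norm_nonneg z
      have : (0:ℝ) ≤ 3/2 * (p:ℝ)⁻¹ := by positivity
      linarith [norm_nonneg z]
    have h3 : (3/2 * (p:ℝ)⁻¹)^2 = 9/4 * ((p:ℝ)^2)⁻¹ := by
      rw [mul_pow, ← inv_pow]; norm_num
    linarith
  have hlast : |r * (f p * (p:ℂ) ^ (-((t:ℂ) * Complex.I))).re
      - (f p * (p:ℂ) ^ (-((t:ℂ) * Complex.I))).re / p| ≤ Real.log p / p * (σ - 1) := by
    have h1 : r * (f p * (p:ℂ) ^ (-((t:ℂ) * Complex.I))).re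
        - (f p * (p:ℂ) ^ (-((t:ℂ) * Complex.I))).re / p
        = (f p * (p:ℂ) ^ (-((t:ℂ) * Complex.I))).re * (r - (p:ℝ)⁻¹) := by
      field_simp
    rw [h1, abs_mul]
    calc |(f p * (p:ℂ) ^ (-((t:ℂ) * Complex.I))).re| * |r - (p:ℝ)⁻¹|
        ≤ 1 * (Real.log p / p * (σ - 1)) := by
          apply mul_le_mul hre_bd hrclose (abs_nonneg _) (by norm_num)
      _ = Real.log p / p * (σ - 1) := one_mul _
  rw [hlogeq]
  have e1 := abs_le.1 hre1
  have e2 := abs_le.1 hzre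
  have e3 := abs_le.1 hlast
  rw [abs_le]
  constructor <;> linarith

end Euler
end Stmt5Aux


open Stmt5Aux in
set_option maxHeartbeats 2000000 in
/-- For a 1-bounded multiplicative `f` vanishing on prime powers with prime `≤ y`,
`|F(1+1/log x+it)| ≍ (log x/log y) · exp(−𝔻(f, n^{it}; y, x)²)` with absolute constants,
where `F` is the truncated Euler product over primes `p ≤ x`. -/
theorem stmt5 :
    ∃ c C : ℝ, 0 < c ∧ 0 < C ∧
      ∀ (f : ℕ → ℂ), (∀ n, ‖f n‖ ≤ 1) → f 1 = 1 →
        (∀ m n : ℕ, Nat.Coprime m n → f (m * n) = f m * f n) →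
        ∀ x y : ℝ, 2 ≤ y → y ≤ x →
          (∀ p k : ℕ, Nat.Prime p → (p : ℝ) ≤ y → 1 ≤ k → f (p ^ k) = 0) →
          ∀ t : ℝ,
            c * Real.exp (-(∑ p ∈ (Icc 1 ⌊x⌋₊).filter (fun p => Nat.Prime p ∧ y < (p : ℝ)),
                  (1 - (f p * (p : ℂ) ^ (-((t : ℂ) * Complex.I))).re) / (p : ℝ))) ≤
              ‖∏ p ∈ (Icc 1 ⌊x⌋₊).filter Nat.Prime,
                  ∑' k : ℕ, f (p ^ k) *
                    (p : ℂ) ^ (-(k : ℂ) * (((1 + 1 / Real.log x : ℝ) : ℂ) + t * Complex.I))‖ *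
                Real.log y / Real.log x ∧
            ‖∏ p ∈ (Icc 1 ⌊x⌋₊).filter Nat.Prime,
                ∑' k : ℕ, f (p ^ k) *
                  (p : ℂ) ^ (-(k : ℂ) * (((1 + 1 / Real.log x : ℝ) : ℂ) + t * Complex.I))‖ *
              Real.log y / Real.log x ≤
              C * Real.exp (-(∑ p ∈ (Icc 1 ⌊x⌋₊).filter (fun p => Nat.Prime p ∧ y < (p : ℝ)),
                  (1 - (f p * (p : ℂ) ^ (-((t : ℂ) * Complex.I))).re) / (p : ℝ))) := by
  refine ⟨Real.exp (-60), Real.exp 60, Real.exp_pos _, Real.exp_pos _, ?_⟩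
  intro f hf hf1 hmul x y hy hyx hvanish t
  have hx2 : (2:ℝ) ≤ x := le_trans hy hyx
  have hlog2 : (0.6931471803 : ℝ) < Real.log 2 := log2_pos
  have hlogx : Real.log 2 ≤ Real.log x := Real.log_le_log (by norm_num) hx2
  have hlogx0 : (0:ℝ) < Real.log x := by linarith
  have hlogy0 : (0:ℝ) < Real.log y := by
    have : Real.log 2 ≤ Real.log y := Real.log_le_log (by norm_num) hy
    linarith
  set σ : ℝ := 1 + 1 / Real.log x with hσdef
  have hσ : 1 < σ := by
    rw [hσdef]
    have : (0:ℝ) < 1 / Real.log x := by positivity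
    linarith
  have hσ1 : σ - 1 = 1 / Real.log x := by rw [hσdef]; ring
  set N := ⌊x⌋₊ with hNdef
  set m := ⌊y⌋₊ with hmdef
  have hm2 : 2 ≤ m := Nat.le_floor (by exact_mod_cast hy)
  have hmN : m ≤ N := Nat.floor_mono hyx
  have hN2 : 2 ≤ N := le_trans hm2 hmN
  have hNx : (N : ℝ) ≤ x := Nat.floor_le (by linarith)
  -- the two index sets
  set Fset := (Icc 1 N).filter Nat.Prime with hFsetdef
  set Pset := (Icc 1 N).filter (fun p => Nat.Prime p ∧ y < (p : ℝ)) with hPsetdef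
  have hPsub : Pset ⊆ Fset := by
    intro p hp
    rw [hPsetdef, Finset.mem_filter] at hp
    rw [hFsetdef, Finset.mem_filter]
    exact ⟨hp.1, hp.2.1⟩
  have hPmem : ∀ p ∈ Pset, Nat.Prime p ∧ 3 ≤ p ∧ p ≤ N := by
    intro p hp
    rw [hPsetdef, Finset.mem_filter, Finset.mem_Icc] at hp
    obtain ⟨⟨h1, h2⟩, hprime, hyp⟩ := hp
    refine ⟨hprime, ?_, h2⟩
    have : (2:ℝ) < (p:ℝ) := lt_of_le_of_lt hy hyp
    have : 2 < p := by exact_mod_cast this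
    omega
  -- notation for the Euler factors
  set G : ℕ → ℂ := fun p => ∑' k : ℕ, f (p ^ k) *
    (p : ℂ) ^ (-(k : ℂ) * (((σ : ℝ) : ℂ) + (t : ℂ) * Complex.I)) with hGdef
  -- factors at small primes are 1
  have hGone : ∀ p ∈ Fset, p ∉ Pset → G p = 1 := by
    intro p hpF hpP
    rw [hFsetdef, Finset.mem_filter] at hpF
    obtain ⟨hpIcc, hprime⟩ := hpF
    have hple : (p : ℝ) ≤ y := by
      by_contra hcon
      push_neg at hcon
      exact hpP (by rw [hPsetdef, Finset.mem_filter]; exact ⟨hpIcc, hprime, hcon⟩)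
    simp only [hGdef]
    have h0 : ∀ k : ℕ, k ≠ 0 → f (p ^ k) *
        (p : ℂ) ^ (-(k : ℂ) * (((σ : ℝ) : ℂ) + (t : ℂ) * Complex.I)) = 0 := by
      intro k hk
      rw [hvanish p k hprime hple (Nat.one_le_iff_ne_zero.2 hk), zero_mul]
    rw [tsum_eq_single 0 h0]
    norm_num [hf1]
  -- per-prime bounds
  have hGbound : ∀ p ∈ Pset, (1/2 : ℝ) ≤ ‖G p‖ ∧
      |Real.log ‖G p‖ - (f p * (p : ℂ) ^ (-((t : ℂ) * Complex.I))).re / p|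
        ≤ 4 * ((p:ℝ)^2)⁻¹ + Real.log p / p * (σ - 1) := by
    intro p hp
    obtain ⟨hprime, hp3, hpN⟩ := hPmem p hp
    have h := euler_factor_bound (f := f) (p := p) (σ := σ) (t := t) hf hf1 hprime hp3 hσ
    simpa [wE, hGdef] using h
  -- sums
  set S : ℝ := ∑ p ∈ Pset, Real.log ‖G p‖ with hSdef
  set A : ℝ := ∑ p ∈ Pset, (f p * (p : ℂ) ^ (-((t : ℂ) * Complex.I))).re / p with hAdef
  set T : ℝ := ∑ p ∈ Pset, ((p:ℝ))⁻¹ with hTdef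
  -- |S - A| ≤ 16
  have hSA : |S - A| ≤ 16 := by
    rw [hSdef, hAdef, ← Finset.sum_sub_distrib]
    calc |∑ p ∈ Pset, (Real.log ‖G p‖ - (f p * (p : ℂ) ^ (-((t : ℂ) * Complex.I))).re / p)|
        ≤ ∑ p ∈ Pset, |Real.log ‖G p‖ - (f p * (p : ℂ) ^ (-((t : ℂ) * Complex.I))).re / p| :=
          Finset.abs_sum_le_sum_abs _ _
      _ ≤ ∑ p ∈ Pset, (4 * ((p:ℝ)^2)⁻¹ + Real.log p / p * (σ - 1)) :=
          Finset.sum_le_sum (fun p hp => (hGbound p hp).2)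
      _ = 4 * (∑ p ∈ Pset, ((p:ℝ)^2)⁻¹) + (σ - 1) * ∑ p ∈ Pset, Real.log p / p := by
          rw [Finset.sum_add_distrib, Finset.mul_sum, Finset.mul_sum]
          congr 1
          apply Finset.sum_congr rfl
          intro p _; ring
      _ ≤ 4 * 1 + (σ - 1) * (Real.log x + 3) := by
          have h1 : ∑ p ∈ Pset, ((p:ℝ)^2)⁻¹ ≤ 1 := by
            calc ∑ p ∈ Pset, ((p:ℝ)^2)⁻¹ ≤ ∑ k ∈ Finset.Icc 2 N, ((k:ℝ)^2)⁻¹ := by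
                  apply Finset.sum_le_sum_of_subset_of_nonneg
                  · intro p hp
                    obtain ⟨hprime, hp3, hpN⟩ := hPmem p hp
                    exact Finset.mem_Icc.2 ⟨by omega, hpN⟩
                  · intro k _ _; positivity
              _ ≤ 1 := sum_inv_sq_le N
          have h2 : ∑ p ∈ Pset, Real.log p / p ≤ Real.log x + 3 := by
            calc ∑ p ∈ Pset, Real.log p / p ≤ ∑ p ∈ Pall N, Real.log p / p := by
                  apply Finset.sum_le_sum_of_subset_of_nonneg hPsub
                  intro p hp _
                  have hprime := (mem_Pall.1 hp).1
                  have h0 : (0:ℝ) ≤ Real.log p := Real.log_natCast_nonneg p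
                  have h0' : (0:ℝ) < (p:ℝ) := by exact_mod_cast hprime.pos
                  positivity
              _ ≤ Real.log N + Real.log 4 := M1_upper (by omega)
              _ ≤ Real.log x + 3 := by
                  have := log_four_le
                  have hlogN : Real.log N ≤ Real.log x :=
                    Real.log_le_log (by exact_mod_cast Nat.lt_of_lt_of_le Nat.zero_lt_two hN2) hNx
                  linarith
          have hσ0 : (0:ℝ) ≤ σ - 1 := by linarith
          nlinarith [mul_le_mul_of_nonneg_left h2 hσ0]
      _ ≤ 16 := by
          rw [hσ1]
          have h3 : 1 / Real.log x * (Real.log x + 3) = 1 + 3 / Real.log x := by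
            field_simp
          rw [h3]
          have h4 : 3 / Real.log x ≤ 3 / 0.6931471803 := by
            apply div_le_div_of_nonneg_left (by norm_num) (by norm_num)
            linarith
          have : (3:ℝ) / 0.6931471803 ≤ 5 := by norm_num
          linarith
  -- T equals the Ioc prime sum, Mertens II
  have hPeq : Pset = (Finset.Ioc m N).filter Nat.Prime := by
    ext q
    simp only [hPsetdef, Finset.mem_filter, Finset.mem_Icc, Finset.mem_Ioc]
    constructor
    · rintro ⟨⟨h1, h2⟩, hprime, hyq⟩
      refine ⟨⟨?_, h2⟩, hprime⟩
      rw [hmdef]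
      exact (Nat.floor_lt (by linarith : (0:ℝ) ≤ y)).2 hyq
    · rintro ⟨⟨h1, h2⟩, hprime⟩
      refine ⟨⟨hprime.one_lt.le, h2⟩, hprime, ?_⟩
      have : (m : ℝ) < (q : ℝ) := by exact_mod_cast h1
      have hym : y < (m : ℝ) + 1 := Nat.lt_floor_add_one y
      have : (m:ℝ) + 1 ≤ (q:ℝ) := by exact_mod_cast h1
      linarith
  have hTsum : T = ∑ n ∈ Finset.Ioc m N, aP n * (Real.log n)⁻¹ := by
    rw [hTdef, hPeq]
    rw [Finset.sum_filter]
    apply Finset.sum_congr rfl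
    intro n hn
    obtain ⟨hn1, hn2⟩ := Finset.mem_Ioc.1 hn
    rw [aP]
    by_cases hprime : Nat.Prime n
    · rw [if_pos hprime, if_pos hprime]
      have h3 : 2 ≤ n := hprime.two_le
      have hlogn : (0:ℝ) < Real.log n := Real.log_pos (by exact_mod_cast hprime.one_lt)
      field_simp
    · rw [if_neg hprime, if_neg hprime, zero_mul]
  have hT : |T - (Real.log (Real.log x) - Real.log (Real.log y))| ≤ 38 := by
    rw [hTsum]
    exact mertens2_real hy hyx
  -- D² = T - A
  have hDeq : (∑ p ∈ Pset, (1 - (f p * (p : ℂ) ^ (-((t : ℂ) * Complex.I))).re) / (p : ℝ))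
      = T - A := by
    rw [hTdef, hAdef, ← Finset.sum_sub_distrib]
    apply Finset.sum_congr rfl
    intro p hp
    obtain ⟨hprime, _, _⟩ := hPmem p hp
    have h0 : (0:ℝ) < (p:ℝ) := by exact_mod_cast hprime.pos
    field_simp
  -- product equals exp S
  have hFeq : ‖∏ p ∈ Fset, G p‖ = Real.exp S := by
    rw [← Finset.prod_subset hPsub hGone]
    rw [norm_prod, hSdef, Real.exp_sum]
    apply Finset.prod_congr rfl
    intro p hp
    rw [Real.exp_log (lt_of_lt_of_le (by norm_num) (hGbound p hp).1)]
  -- final quantity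
  have hQ : ‖∏ p ∈ Fset, G p‖ * Real.log y / Real.log x
      = Real.exp (S + Real.log (Real.log y) - Real.log (Real.log x)) := by
    rw [hFeq, Real.exp_sub, Real.exp_add, Real.exp_log hlogy0, Real.exp_log hlogx0]
  have hbound1 : -60 + -(T - A) ≤ S + Real.log (Real.log y) - Real.log (Real.log x) := by
    have e1 := abs_le.1 hSA
    have e2 := abs_le.1 hT
    linarith
  have hbound2 : S + Real.log (Real.log y) - Real.log (Real.log x) ≤ 60 + -(T - A) := by
    have e1 := abs_le.1 hSA
    have e2 := abs_le.1 hT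
    linarith
  rw [hDeq]
  constructor
  · calc Real.exp (-60) * Real.exp (-(T - A)) = Real.exp (-60 + -(T - A)) := by
          rw [← Real.exp_add]
      _ ≤ Real.exp (S + Real.log (Real.log y) - Real.log (Real.log x)) :=
          Real.exp_le_exp.2 hbound1
      _ = ‖∏ p ∈ Fset, G p‖ * Real.log y / Real.log x := hQ.symm
  · calc ‖∏ p ∈ Fset, G p‖ * Real.log y / Real.log x
        = Real.exp (S + Real.log (Real.log y) - Real.log (Real.log x)) := hQ
      _ ≤ Real.exp (60 + -(T - A)) := Real.exp_le_exp.2 hbound2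
      _ = Real.exp 60 * Real.exp (-(T - A)) := by rw [← Real.exp_add]
end

section
/- With W̃ as above, let F(u) := W̃(−u/log y) = κ^{−2}·(e^{−(1+κ)u} − e^{−(1+κ−κ²)u} − e^{−(1+κ²)u} + e^{−u})·(log y)²/u² for u ≠ 0, extended continuously to u = 0. Then F(0) = κ(1−κ)·(log y)², and F is decreasing on [0, ∞). -/
/-- The trapezoid function `g` with parameter `κ`. -/
noncomputable def trap (κ u : ℝ) : ℝ :=
  if u < 0 then 0
  else if u ≤ κ ^ 2 then (κ ^ 2)⁻¹ * u
  else if u ≤ κ - κ ^ 2 then 1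
  else if u ≤ κ then (κ ^ 2)⁻¹ * (κ - u)
  else 0

/-- The weight `W(t) = g(log(t/y)/log y)·log y`. -/
noncomputable def trapW (κ y t : ℝ) : ℝ :=
  trap κ (Real.log (t / y) / Real.log y) * Real.log y

/-- `F(u) := W̃(−u/log y) = ∫₀^∞ W(t) t^{−u/log y − 1} dt`. -/
noncomputable def trapF (κ y u : ℝ) : ℝ :=
  ∫ t in Set.Ioi (0 : ℝ), trapW κ y t * t ^ (-u / Real.log y - 1)

lemma trap_max_min {κ : ℝ} (hκ : 0 < κ) (hκ2 : κ < 1 / 2) (u : ℝ) :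
    trap κ u = max 0 (min ((κ ^ 2)⁻¹ * u) (min 1 ((κ ^ 2)⁻¹ * (κ - u)))) := by
  have hκ2pos : (0:ℝ) < κ ^ 2 := by positivity
  have hc : (0:ℝ) < (κ ^ 2)⁻¹ := by positivity
  have hcκ : (κ ^ 2)⁻¹ * κ ^ 2 = 1 := inv_mul_cancel₀ (ne_of_gt hκ2pos)
  have hk : 2 * κ ^ 2 ≤ κ := by nlinarith
  unfold trap
  split_ifs with h1 h2 h3 h4
  · rw [max_eq_left]
    refine le_trans (min_le_left _ _) ?_
    exact mul_nonpos_of_nonneg_of_nonpos hc.le h1.le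
  · push_neg at h1
    rw [min_eq_left (le_min ?_ ?_), max_eq_right (by positivity)]
    · nlinarith [mul_le_mul_of_nonneg_left h2 hc.le]
    · nlinarith [mul_le_mul_of_nonneg_left (show u ≤ κ - u by nlinarith) hc.le]
  · push_neg at h1 h2
    rw [min_eq_left (show (1:ℝ) ≤ _ by
        nlinarith [mul_le_mul_of_nonneg_left (show κ ^ 2 ≤ κ - u by linarith) hc.le]),
      min_eq_right (show (1:ℝ) ≤ _ by nlinarith [mul_le_mul_of_nonneg_left h2.le hc.le]),
      max_eq_right zero_le_one]
  · push_neg at h1 h2 h3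
    rw [min_eq_right (show (κ ^ 2)⁻¹ * (κ - u) ≤ 1 by
        nlinarith [mul_le_mul_of_nonneg_left (show κ - u ≤ κ ^ 2 by linarith) hc.le]),
      min_eq_right (show (κ ^ 2)⁻¹ * (κ - u) ≤ (κ ^ 2)⁻¹ * u by
        nlinarith [mul_le_mul_of_nonneg_left (show κ - u ≤ u by nlinarith) hc.le]),
      max_eq_right (by nlinarith [mul_le_mul_of_nonneg_left (show (0:ℝ) ≤ κ - u by linarith) hc.le])]
  · push_neg at h4
    rw [max_eq_left]
    refine le_trans (min_le_right _ _) (le_trans (min_le_right _ _) ?_)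
    exact mul_nonpos_of_nonneg_of_nonpos hc.le (by linarith)

lemma trap_continuous {κ : ℝ} (hκ : 0 < κ) (hκ2 : κ < 1 / 2) : Continuous (trap κ) := by
  have : trap κ = fun u => max 0 (min ((κ ^ 2)⁻¹ * u) (min 1 ((κ ^ 2)⁻¹ * (κ - u)))) :=
    funext (trap_max_min hκ hκ2)
  rw [this]; fun_prop

lemma trap_eq_zero_of_nonpos {κ u : ℝ} (hκ : 0 < κ) (hu : u ≤ 0) : trap κ u = 0 := by
  unfold trap
  split_ifs with h1 h2 h3 h4
  · rfl
  · have : u = 0 := le_antisymm hu (not_lt.1 h1)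
    simp [this]
  · nlinarith [not_lt.1 h1]
  · nlinarith [not_lt.1 h1]
  · rfl

lemma trap_eq_zero_of_gt {κ u : ℝ} (hκ : 0 < κ) (hκ2 : κ < 1 / 2) (hu : κ < u) :
    trap κ u = 0 := by
  unfold trap
  split_ifs with h1 h2 h3 h4
  · rfl
  · nlinarith
  · nlinarith
  · linarith
  · rfl

lemma int_exp {u : ℝ} (hu : u ≠ 0) (p q : ℝ) :
    ∫ v in p..q, Real.exp (-u * (1 + v)) =
      (Real.exp (-u * (1 + p)) - Real.exp (-u * (1 + q))) / u := by
  have key : ∀ v ∈ Set.uIcc p q, HasDerivAt (fun w => -Real.exp (-u * (1 + w)) / u)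
      (Real.exp (-u * (1 + v))) v := by
    intro v _
    have h1 : HasDerivAt (fun w : ℝ => -u * (1 + w)) (-u) v := by
      simpa using ((hasDerivAt_id v).const_add 1).const_mul (-u)
    have h2 := (h1.exp).neg.div_const u
    refine h2.congr_deriv ?_
    rw [div_eq_iff hu]; ring
  rw [intervalIntegral.integral_eq_sub_of_hasDerivAt key
    (Continuous.intervalIntegrable (by fun_prop) _ _)]
  ring

lemma int_vexp {u : ℝ} (hu : u ≠ 0) (p q : ℝ) :
    ∫ v in p..q, v * Real.exp (-u * (1 + v)) =
      (p / u + 1 / u ^ 2) * Real.exp (-u * (1 + p))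
        - (q / u + 1 / u ^ 2) * Real.exp (-u * (1 + q)) := by
  have key : ∀ v ∈ Set.uIcc p q, HasDerivAt
      (fun w => -((w / u + 1 / u ^ 2) * Real.exp (-u * (1 + w))))
      (v * Real.exp (-u * (1 + v))) v := by
    intro v _
    have h1 : HasDerivAt (fun w : ℝ => -u * (1 + w)) (-u) v := by
      simpa using ((hasDerivAt_id v).const_add 1).const_mul (-u)
    have h2 : HasDerivAt (fun w : ℝ => w / u + 1 / u ^ 2) (1 / u) v :=
      ((hasDerivAt_id v).div_const u).add_const (1 / u ^ 2)
    have h3 := (h2.mul h1.exp).neg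
    refine h3.congr_deriv ?_
    field_simp
    ring
  rw [intervalIntegral.integral_eq_sub_of_hasDerivAt key
    (Continuous.intervalIntegrable (by fun_prop) _ _)]
  ring

lemma trap_split {κ : ℝ} (hκ : 0 < κ) (hκ2 : κ < 1 / 2) (f : ℝ → ℝ)
    (hf : Continuous f) :
    ∫ v in (0:ℝ)..κ, trap κ v * f v =
      (∫ v in (0:ℝ)..κ^2, (κ ^ 2)⁻¹ * (v * f v)) +
      (∫ v in (κ^2)..(κ - κ^2), f v) +
      (∫ v in (κ - κ^2)..κ, (κ ^ 2)⁻¹ * ((κ - v) * f v)) := by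
  have hcont : Continuous fun v => trap κ v * f v := (trap_continuous hκ hκ2).mul hf
  have hint : ∀ p q : ℝ, IntervalIntegrable (fun v => trap κ v * f v) MeasureTheory.volume p q :=
    fun p q => hcont.intervalIntegrable p q
  have hab : κ^2 < κ - κ^2 := by nlinarith
  have h0a : (0:ℝ) < κ^2 := by positivity
  have hbk : κ - κ^2 < κ := by nlinarith
  rw [← intervalIntegral.integral_add_adjacent_intervals (hint 0 (κ^2)) (hint (κ^2) κ),
    ← intervalIntegral.integral_add_adjacent_intervals (hint (κ^2) (κ-κ^2)) (hint (κ-κ^2) κ),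
    ← add_assoc]
  congr 1
  · congr 1
    · apply intervalIntegral.integral_congr
      intro v hv
      rw [Set.uIcc_of_le h0a.le] at hv
      simp only [trap]
      rw [if_neg (by simp only [not_lt]; linarith [hv.1]), if_pos hv.2]
      ring
    · apply intervalIntegral.integral_congr
      intro v hv
      rw [Set.uIcc_of_le hab.le] at hv
      simp only [trap]
      split_ifs with h1 h2 h3 h4
      · linarith [hv.1, h0a]
      · have hveq : v = κ^2 := le_antisymm h2 hv.1
        rw [hveq]; field_simp
      · ring
      · linarith [hv.2]
      · linarith [hv.2]
  · apply intervalIntegral.integral_congr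
    intro v hv
    rw [Set.uIcc_of_le hbk.le] at hv
    simp only [trap]
    split_ifs with h1 h2 h3 h4
    · linarith [hv.1, h0a, hab]
    · linarith [hv.1, hab]
    · have hveq : v = κ - κ^2 := le_antisymm h3 hv.1
      rw [hveq]; field_simp; ring
    · ring
    · linarith [hv.2]

lemma K_ne {κ : ℝ} (hκ : 0 < κ) (hκ2 : κ < 1 / 2) {u : ℝ} (hu : u ≠ 0) :
    ∫ v in (0:ℝ)..κ, trap κ v * Real.exp (-u * (1 + v)) =
      (κ ^ 2)⁻¹ * (Real.exp (-(1 + κ) * u) - Real.exp (-(1 + κ - κ ^ 2) * u)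
        - Real.exp (-(1 + κ ^ 2) * u) + Real.exp (-u)) / u ^ 2 := by
  have hκ2pos : (0:ℝ) < κ ^ 2 := by positivity
  rw [trap_split hκ hκ2 _ (by fun_prop)]
  rw [intervalIntegral.integral_const_mul, intervalIntegral.integral_const_mul]
  have hsub : ∀ p q : ℝ, ∫ v in p..q, (κ - v) * Real.exp (-u * (1 + v)) =
      κ * ((Real.exp (-u * (1 + p)) - Real.exp (-u * (1 + q))) / u)
        - ((p / u + 1 / u ^ 2) * Real.exp (-u * (1 + p))
            - (q / u + 1 / u ^ 2) * Real.exp (-u * (1 + q))) := by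
    intro p q
    rw [← int_exp hu, ← int_vexp hu, ← intervalIntegral.integral_const_mul,
      ← intervalIntegral.integral_sub
        (Continuous.intervalIntegrable (by fun_prop) _ _)
        (Continuous.intervalIntegrable (by fun_prop) _ _)]
    apply intervalIntegral.integral_congr
    intro v _
    ring
  rw [int_vexp hu, int_exp hu, hsub]
  rw [show -u * (1 + (0:ℝ)) = -u by ring, show -u * (1 + κ ^ 2) = -(1 + κ ^ 2) * u by ring,
    show -u * (1 + (κ - κ ^ 2)) = -(1 + κ - κ ^ 2) * u by ring,
    show -u * (1 + κ) = -(1 + κ) * u by ring]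
  field_simp
  ring

lemma K_zero {κ : ℝ} (hκ : 0 < κ) (hκ2 : κ < 1 / 2) :
    ∫ v in (0:ℝ)..κ, trap κ v * Real.exp (-(0:ℝ) * (1 + v)) = κ - κ ^ 2 := by
  have hκ2pos : (0:ℝ) < κ ^ 2 := by positivity
  rw [trap_split hκ hκ2 _ (by fun_prop)]
  simp only [neg_zero, zero_mul, Real.exp_zero, mul_one]
  have h1 : ∫ v in (0:ℝ)..κ^2, (κ^2)⁻¹ * v = (κ^2)⁻¹ * (((κ^2)^2 - 0^2)/2) := by
    rw [intervalIntegral.integral_const_mul, integral_id]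
  have h2 : ∫ _v in (κ^2)..(κ-κ^2), (1:ℝ) = (κ - κ^2) - κ^2 := by simp
  have h3 : ∫ v in (κ-κ^2)..κ, (κ^2)⁻¹ * (κ - v)
      = (κ^2)⁻¹ * ((κ - (κ-κ^2)) • κ - (κ^2 - (κ-κ^2)^2)/2) := by
    rw [intervalIntegral.integral_const_mul,
      intervalIntegral.integral_sub intervalIntegrable_const (Continuous.intervalIntegrable (by fun_prop : Continuous fun x : ℝ => x) _ _),
      intervalIntegral.integral_const, integral_id]
  rw [h1, h2, h3]
  simp only [smul_eq_mul]
  field_simp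
  ring

noncomputable def expInt (c u : ℝ) : ℝ := ∫ t in (0:ℝ)..c, Real.exp (-(u * t))

lemma expInt_ne {u : ℝ} (hu : u ≠ 0) (c : ℝ) :
    expInt c u = (1 - Real.exp (-(u * c))) / u := by
  have key : ∀ t ∈ Set.uIcc (0:ℝ) c, HasDerivAt (fun w => -Real.exp (-(u * w)) / u)
      (Real.exp (-(u * t))) t := by
    intro t _
    have h1 : HasDerivAt (fun w : ℝ => -(u * w)) (-u) t := by
      simpa using (hasDerivAt_id t).const_mul (-u)
    have h2 := (h1.exp).neg.div_const u
    refine h2.congr_deriv ?_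
    rw [div_eq_iff hu]; ring
  rw [expInt, intervalIntegral.integral_eq_sub_of_hasDerivAt key
    (Continuous.intervalIntegrable (by fun_prop) _ _)]
  simp
  ring

lemma expInt_zero (c : ℝ) : expInt c 0 = c := by
  simp [expInt]

lemma expInt_nonneg (c u : ℝ) (hc : 0 ≤ c) : 0 ≤ expInt c u :=
  intervalIntegral.integral_nonneg hc fun t _ => (Real.exp_pos _).le

lemma expInt_anti (c : ℝ) (hc : 0 ≤ c) {u v : ℝ} (hu : 0 ≤ u) (huv : u ≤ v) :
    expInt c v ≤ expInt c u := by
  apply intervalIntegral.integral_mono_on hc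
    (Continuous.intervalIntegrable (by fun_prop) _ _)
    (Continuous.intervalIntegrable (by fun_prop) _ _)
  intro t ht
  apply Real.exp_le_exp.2
  nlinarith [ht.1]

lemma trapF_eq {κ y : ℝ} (hκ : 0 < κ) (hκ2 : κ < 1 / 2) (hy : Real.exp 1 < y) (u : ℝ) :
    trapF κ y u = (Real.log y) ^ 2 * ∫ v in (0:ℝ)..κ, trap κ v * Real.exp (-u * (1 + v)) := by
  set L := Real.log y with hLdef
  have hy1 : (1:ℝ) < y := by nlinarith [Real.add_one_le_exp (1:ℝ)]
  have hy0 : (0:ℝ) < y := by linarith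
  have hL : 0 < L := Real.log_pos hy1
  have hyL : Real.exp L = y := Real.exp_log hy0
  set B := Real.exp (L * (1 + κ)) with hBdef
  have hyB : y ≤ B := by
    rw [← hyL]; apply Real.exp_le_exp.2; nlinarith
  set g : ℝ → ℝ := fun t => trapW κ y t * t ^ (-u / L - 1) with hg
  have hgc : ContinuousOn g (Set.Ioi 0) := by
    intro t ht
    have ht0 : (0:ℝ) < t := ht
    apply ContinuousAt.continuousWithinAt
    have h1 : ContinuousAt (fun t : ℝ => Real.log (t / y)) t := by
      apply (Real.continuousAt_log (by positivity)).comp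
      exact continuousAt_id.div_const y
    have h2 : ContinuousAt (fun t : ℝ => trapW κ y t) t := by
      apply ContinuousAt.mul _ continuousAt_const
      exact ((trap_continuous hκ hκ2).continuousAt).comp (h1.div_const L)
    exact h2.mul (Real.continuousAt_rpow_const t _ (Or.inl (ne_of_gt ht0)))
  have hEq : Set.EqOn (fun t => trapW κ y t * t ^ (-u / Real.log y - 1))
      (fun t => Set.indicator (Set.Ioc y B) g t) (Set.Ioi 0) := by
    intro t ht
    have ht0 : (0:ℝ) < t := ht
    by_cases hmem : t ∈ Set.Ioc y B
    · simp only [Set.indicator_of_mem hmem]; rfl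
    · simp only [Set.indicator_of_notMem hmem]
      have hW : trapW κ y t = 0 := by
        rw [trapW]
        have harg : Real.log (t / y) = Real.log t - L := by
          rw [Real.log_div (ne_of_gt ht0) (ne_of_gt hy0)]
        rw [harg]
        rcases le_or_gt t y with hty | hty
        · have hlog : Real.log t ≤ L := Real.log_le_log ht0 hty
          rw [trap_eq_zero_of_nonpos hκ (div_nonpos_of_nonpos_of_nonneg (by linarith) hL.le),
            zero_mul]
        · have htB : B < t := by
            rcases le_or_gt t B with h' | h'
            · exact absurd ⟨hty, h'⟩ hmem
            · exact h'
          have hlog : L * (1 + κ) < Real.log t := by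
            have := Real.log_lt_log (Real.exp_pos _) htB
            rwa [Real.log_exp] at this
          rw [trap_eq_zero_of_gt hκ hκ2 (by rw [lt_div_iff₀ hL]; nlinarith), zero_mul]
      show trapW κ y t * t ^ (-u / Real.log y - 1) = 0
      rw [hW, zero_mul]
  have hstep1 : trapF κ y u = ∫ t in Set.Ioc y B, g t := by
    rw [trapF, MeasureTheory.setIntegral_congr_fun measurableSet_Ioi hEq,
      MeasureTheory.setIntegral_indicator measurableSet_Ioc,
      Set.inter_eq_self_of_subset_right
        (show Set.Ioc y B ⊆ Set.Ioi 0 from fun t htm => lt_trans hy0 htm.1)]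
  have hderiv : ∀ x ∈ Set.uIcc (0:ℝ) κ,
      HasDerivAt (fun v => Real.exp (L * (1 + v))) (L * Real.exp (L * (1 + x))) x := by
    intro x _
    have := (((hasDerivAt_id x).const_add 1).const_mul L).exp
    simpa [mul_comm] using this
  have hsub : ∫ t in y..B, g t
      = ∫ v in (0:ℝ)..κ, (L * Real.exp (L * (1 + v))) • g (Real.exp (L * (1 + v))) := by
    have h0 : Real.exp (L * (1 + 0)) = y := by norm_num [hyL]
    rw [show ∫ t in y..B, g t = ∫ t in (Real.exp (L * (1 + 0)))..(Real.exp (L * (1 + κ))), g t by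
      rw [h0]]
    exact (intervalIntegral.integral_comp_smul_deriv' hderiv (by fun_prop)
      (hgc.mono (by rintro x ⟨v, -, rfl⟩; exact Real.exp_pos _))).symm
  have hpt : ∫ v in (0:ℝ)..κ, (L * Real.exp (L * (1 + v))) • g (Real.exp (L * (1 + v)))
      = ∫ v in (0:ℝ)..κ, L ^ 2 * (trap κ v * Real.exp (-u * (1 + v))) := by
    apply intervalIntegral.integral_congr
    intro v _
    have hE : (0:ℝ) < Real.exp (L * (1 + v)) := Real.exp_pos _
    simp only [smul_eq_mul, hg, trapW]
    have hlog : Real.log (Real.exp (L * (1 + v)) / y) / L = v := by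
      rw [Real.log_div (ne_of_gt hE) (ne_of_gt hy0), Real.log_exp, ← hLdef]
      field_simp
      ring
    have hpow : Real.exp (L * (1 + v)) ^ (-u / L - 1)
        = Real.exp (-u * (1 + v)) * Real.exp (-(L * (1 + v))) := by
      rw [Real.rpow_def_of_pos hE, Real.log_exp, ← Real.exp_add]
      congr 1
      field_simp
      ring
    rw [hlog, hpow]
    have hcancel : Real.exp (L * (1 + v)) * Real.exp (-(L * (1 + v))) = 1 := by
      rw [← Real.exp_add, add_neg_cancel, Real.exp_zero]
    linear_combination (L ^ 2 * trap κ v * Real.exp (-u * (1 + v))) * hcancel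
  rw [hstep1, ← intervalIntegral.integral_of_le hyB, hsub, hpt,
    intervalIntegral.integral_const_mul]

/-- `F(u) = κ^{−2}(e^{−(1+κ)u} − e^{−(1+κ−κ²)u} − e^{−(1+κ²)u} + e^{−u})(log y)²/u²` for
`u ≠ 0`, `F(0) = κ(1−κ)(log y)²`, and `F` is decreasing on `[0, ∞)`. -/
theorem stmt15 (κ y : ℝ) (hκ : 0 < κ) (hκ2 : κ < 1 / 2) (hy : Real.exp 1 < y) :
    (∀ u : ℝ, u ≠ 0 →
        trapF κ y u = (κ ^ 2)⁻¹ *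
          (Real.exp (-(1 + κ) * u) - Real.exp (-(1 + κ - κ ^ 2) * u)
            - Real.exp (-(1 + κ ^ 2) * u) + Real.exp (-u)) * (Real.log y) ^ 2 / u ^ 2) ∧
      trapF κ y 0 = κ * (1 - κ) * (Real.log y) ^ 2 ∧
      AntitoneOn (trapF κ y) (Set.Ici 0) := by
  have hκ2pos : (0:ℝ) < κ ^ 2 := by positivity
  have key := trapF_eq hκ hκ2 hy
  refine ⟨?_, ?_, ?_⟩
  · intro u hu
    rw [key u, K_ne hκ hκ2 hu]
    ring
  · rw [key 0, K_zero hκ hκ2]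
    ring
  · have hG : ∀ u : ℝ, trapF κ y u = (κ ^ 2)⁻¹ * (Real.log y) ^ 2 *
        (Real.exp (-u) * (expInt (κ ^ 2) u * expInt (κ - κ ^ 2) u)) := by
      intro u
      rcases eq_or_ne u 0 with rfl | hu
      · rw [key 0, K_zero hκ hκ2]
        simp only [expInt_zero, neg_zero, Real.exp_zero, one_mul]
        field_simp
      · rw [key u, K_ne hκ hκ2 hu, expInt_ne hu, expInt_ne hu]
        rw [show -(1 + κ) * u = (-u) + (-(u * κ ^ 2) + -(u * (κ - κ ^ 2))) by ring,
          Real.exp_add, Real.exp_add,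
          show -(1 + κ - κ ^ 2) * u = (-u) + (-(u * (κ - κ ^ 2))) by ring, Real.exp_add,
          show -(1 + κ ^ 2) * u = (-u) + (-(u * κ ^ 2)) by ring, Real.exp_add]
        field_simp
        ring
    intro u hu v hv huv
    rw [hG u, hG v]
    have ha := expInt_anti (κ ^ 2) hκ2pos.le (Set.mem_Ici.1 hu) huv
    have hb := expInt_anti (κ - κ ^ 2) (by nlinarith) (Set.mem_Ici.1 hu) huv
    have hna : 0 ≤ expInt (κ ^ 2) u := expInt_nonneg _ _ hκ2pos.le
    have hnav : 0 ≤ expInt (κ ^ 2) v := expInt_nonneg _ _ hκ2pos.le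
    have hnbv : 0 ≤ expInt (κ - κ ^ 2) v := expInt_nonneg _ _ (by nlinarith)
    apply mul_le_mul_of_nonneg_left _ (by positivity)
    apply mul_le_mul (Real.exp_le_exp.2 (by linarith))
      (mul_le_mul ha hb hnbv hna) (by positivity) (Real.exp_pos _).le
end
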